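/- arXiv:1812.04925 — 5 statements merged into one kernel-verified Lean document; each statement's English description precedes it below -/
import Mathlib

section
/- Let λ be a frequency, (a_n) complex coefficients, and suppose the series ∑_n a_n e^{−λ_n s₀} converges (its partial sums converge) for some s₀ ∈ ℂ. Then for every σ > max(0, Re s₀) and every k ≥ 0, the function ℝ → ℂ given by x ↦ e^{−σx} · ∑_{n : λ_n < x} a_n (x − λ_n)^k (the finite sum, equal to 0 when no λ_n < x) is integrable on ℝ (i.e. belongs to L¹(ℝ)). -/
open Filter Finset Complex MeasureTheory Topology

/-- Partial sum `S_N(s) = ∑_{n=1}^N a_n e^{−λ_n s}` of a general Dirichlet series. -/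
noncomputable def partialSum (lam : ℕ → ℝ) (a : ℕ → ℂ) (N : ℕ) (s : ℂ) : ℂ :=
  ∑ n ∈ Finset.Icc 1 N, a n * Complex.exp (-(lam n : ℂ) * s)

/-- A frequency: strictly increasing (indexed from 1), nonnegative, tending to infinity. -/
def IsFrequency (lam : ℕ → ℝ) : Prop :=
  (∀ n : ℕ, 1 ≤ n → lam n < lam (n + 1)) ∧ 0 ≤ lam 1 ∧ Tendsto lam atTop atTop

/-- `(a_n)` belongs to `D∞^ext(λ)` with extension `f` and bound `M`. -/
def MemDExt (lam : ℕ → ℝ) (a : ℕ → ℂ) (f : ℂ → ℂ) (M : ℝ) : Prop :=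
  (∃ σ₀ : ℝ,
    (∀ s : ℂ, σ₀ < s.re →
      ∃ L : ℂ, Tendsto (fun N => partialSum lam a N s) atTop (nhds L)) ∧
    (∀ s : ℂ, max σ₀ 0 < s.re →
      Tendsto (fun N => partialSum lam a N s) atTop (nhds (f s)))) ∧
  DifferentiableOn ℂ f {s : ℂ | 0 < s.re} ∧
  (∀ s : ℂ, 0 < s.re → ‖f s‖ ≤ M)

private lemma telescope_sum (f : ℕ → ℝ) (N : ℕ) :
    ∑ n ∈ Finset.Icc 1 N, (f (n + 1) - f n) = f (N + 1) - f 1 := by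
  induction N with
  | zero => simp
  | succ N ih =>
    rw [Finset.sum_Icc_succ_top (Nat.le_add_left 1 N), ih]; ring

private lemma telescope_sum' (f : ℕ → ℝ) (N : ℕ) :
    ∑ n ∈ Finset.Icc 1 N, (f n - f (n + 1)) = f 1 - f (N + 1) := by
  have h2 : ∑ n ∈ Finset.Icc 1 N, (f n - f (n + 1)) =
      -∑ n ∈ Finset.Icc 1 N, (f (n + 1) - f n) := by
    rw [← Finset.sum_neg_distrib]; exact Finset.sum_congr rfl fun n _ => by ring
  rw [h2, telescope_sum f N]; ring

private lemma abel_sum (b c : ℕ → ℂ) (N : ℕ) :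
    ∑ n ∈ Finset.Icc 1 N, c n * b n =
      c (N + 1) * (∑ m ∈ Finset.Icc 1 N, b m) +
        ∑ n ∈ Finset.Icc 1 N, (c n - c (n + 1)) * (∑ m ∈ Finset.Icc 1 n, b m) := by
  induction N with
  | zero => simp
  | succ N ih =>
    rw [Finset.sum_Icc_succ_top (Nat.le_add_left 1 N) (fun n => c n * b n), ih,
      Finset.sum_Icc_succ_top (Nat.le_add_left 1 N)
        (fun n => (c n - c (n + 1)) * (∑ m ∈ Finset.Icc 1 n, b m)),
      Finset.sum_Icc_succ_top (Nat.le_add_left 1 N) b]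
    ring

private lemma exp_mvt (s₀ : ℂ) (x u v : ℝ) (hu : u ∈ Set.Icc 0 x) (hv : v ∈ Set.Icc 0 x)
    (huv : u ≤ v) (E : ℝ)
    (hE : ∀ t ∈ Set.Icc (0:ℝ) x, ‖Complex.exp ((t:ℂ) * s₀)‖ ≤ E) :
    ‖Complex.exp ((u:ℂ) * s₀) - Complex.exp ((v:ℂ) * s₀)‖ ≤
      E * ‖s₀‖ * (v - u) := by
  have key := Convex.norm_image_sub_le_of_norm_hasDerivWithin_le
    (f := fun t : ℝ => Complex.exp ((t : ℂ) * s₀))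
    (f' := fun t : ℝ => Complex.exp ((t : ℂ) * s₀) * s₀)
    (s := Set.Icc 0 x) (C := E * ‖s₀‖)
    (fun t _ => by
      have h1 : HasDerivAt (fun t : ℝ => ((t : ℂ) * s₀)) s₀ t := by
        simpa using (Complex.ofRealCLM.hasDerivAt (x := t)).mul_const s₀
      exact h1.cexp.hasDerivWithinAt)
    (fun t ht => by
      rw [norm_mul]
      exact mul_le_mul_of_nonneg_right (hE t ht) (norm_nonneg _))
    (convex_Icc 0 x) hv hu
  calc ‖Complex.exp ((u:ℂ) * s₀) - Complex.exp ((v:ℂ) * s₀)‖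
      ≤ E * ‖s₀‖ * ‖u - v‖ := key
    _ = E * ‖s₀‖ * (v - u) := by
        rw [Real.norm_eq_abs, abs_sub_comm, _root_.abs_of_nonneg (by linarith : (0:ℝ) ≤ v - u)]

private lemma key_bound (lam : ℕ → ℝ) (a : ℕ → ℂ) (s₀ : ℂ)
    (hmono : ∀ m n : ℕ, 1 ≤ m → m ≤ n → lam m ≤ lam n) (h1 : 0 ≤ lam 1)
    (C : ℝ) (hC : ∀ N, ‖partialSum lam a N s₀‖ ≤ C)
    (x k : ℝ) (hx : 0 < x) (hk : 0 ≤ k) (N : ℕ)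
    (hN : ∀ n, n ∈ Finset.Icc 1 N → lam n < x) :
    ‖∑ n ∈ Finset.Icc 1 N, a n * (((x - lam n) ^ k : ℝ) : ℂ)‖ ≤
      C * Real.exp (max 0 s₀.re * x) * (x ^ k * (2 + ‖s₀‖ * x)) := by
  set σ' : ℝ := max 0 s₀.re with hσ'
  set E : ℝ := Real.exp (σ' * x) with hEdef
  have hE0 : 0 < E := Real.exp_pos _
  have hC0 : 0 ≤ C := le_trans (by simp [partialSum]) (hC 0)
  set μ : ℕ → ℝ := fun n => min (lam n) x with hμ
  have hμ0 : ∀ n, 1 ≤ n → 0 ≤ μ n := fun n hn =>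
    le_min (le_trans h1 (hmono 1 n le_rfl hn)) hx.le
  have hμx : ∀ n, μ n ≤ x := fun n => min_le_right _ _
  have hμmono : ∀ n, 1 ≤ n → μ n ≤ μ (n + 1) := fun n hn =>
    min_le_min (hmono n (n + 1) hn (Nat.le_succ n)) le_rfl
  have hxk0 : 0 ≤ x ^ k := Real.rpow_nonneg hx.le k
  have hsub0 : ∀ n, 0 ≤ x - μ n := fun n => by linarith [hμx n]
  have hrpow0 : ∀ n, 0 ≤ (x - μ n) ^ k := fun n => Real.rpow_nonneg (hsub0 n) k
  have hrpowx : ∀ n, 1 ≤ n → (x - μ n) ^ k ≤ x ^ k := fun n hn =>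
    Real.rpow_le_rpow (hsub0 n) (by linarith [hμ0 n hn]) hk
  have hrpowmono : ∀ n, 1 ≤ n → (x - μ (n + 1)) ^ k ≤ (x - μ n) ^ k := fun n hn =>
    Real.rpow_le_rpow (hsub0 (n + 1)) (by linarith [hμmono n hn]) hk
  have hEbd : ∀ t ∈ Set.Icc (0:ℝ) x, ‖Complex.exp ((t:ℂ) * s₀)‖ ≤ E := by
    intro t ht
    rw [Complex.norm_exp]
    apply Real.exp_le_exp.2
    have h1' : (↑t * s₀).re = t * s₀.re := by simp
    rw [h1']
    calc t * s₀.re ≤ t * σ' := mul_le_mul_of_nonneg_left (le_max_right _ _) ht.1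
      _ ≤ x * σ' := mul_le_mul_of_nonneg_right ht.2 (le_max_left _ _)
      _ = σ' * x := mul_comm _ _
  set c : ℕ → ℂ := fun n => Complex.exp ((μ n : ℂ) * s₀) * (((x - μ n) ^ k : ℝ) : ℂ) with hc
  set b : ℕ → ℂ := fun n => a n * Complex.exp (-(lam n : ℂ) * s₀) with hb
  have hterm : ∀ n ∈ Finset.Icc 1 N, a n * (((x - lam n) ^ k : ℝ) : ℂ) = c n * b n := by
    intro n hn
    have hlt : lam n < x := hN n hn
    have hμn : μ n = lam n := min_eq_left hlt.le
    have hexp : Complex.exp ((lam n : ℂ) * s₀) * Complex.exp (-(lam n : ℂ) * s₀) = 1 := by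
      rw [← Complex.exp_add, neg_mul, add_neg_cancel, Complex.exp_zero]
    rw [hc, hb]
    simp only [hμn]
    calc a n * (((x - lam n) ^ k : ℝ) : ℂ)
        = (Complex.exp ((lam n : ℂ) * s₀) * Complex.exp (-(lam n : ℂ) * s₀)) *
            (a n * (((x - lam n) ^ k : ℝ) : ℂ)) := by rw [hexp, one_mul]
      _ = Complex.exp ((lam n : ℂ) * s₀) * (((x - lam n) ^ k : ℝ) : ℂ) *
            (a n * Complex.exp (-(lam n : ℂ) * s₀)) := by ring
  rw [Finset.sum_congr rfl hterm, abel_sum]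
  have habs_c : ∀ n, 1 ≤ n → ‖c n‖ ≤ E * x ^ k := by
    intro n hn
    rw [hc]
    simp only [norm_mul, Complex.norm_real, Real.norm_eq_abs]
    have h1' : ‖Complex.exp ((μ n : ℂ) * s₀)‖ ≤ E :=
      hEbd (μ n) ⟨hμ0 n hn, hμx n⟩
    have h2' : |(x - μ n) ^ k| ≤ x ^ k := by
      rw [_root_.abs_of_nonneg (hrpow0 n)]
      exact hrpowx n hn
    exact mul_le_mul h1' h2' (abs_nonneg _) hE0.le
  have hB : ∀ n : ℕ, (∑ m ∈ Finset.Icc 1 n, b m) = partialSum lam a n s₀ := fun n => rfl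
  have hdiff : ∀ n, 1 ≤ n → ‖c n - c (n + 1)‖ ≤
      E * ‖s₀‖ * x ^ k * (μ (n + 1) - μ n) +
        E * ((x - μ n) ^ k - (x - μ (n + 1)) ^ k) := by
    intro n hn
    have hu : μ n ∈ Set.Icc (0:ℝ) x := ⟨hμ0 n hn, hμx n⟩
    have hv : μ (n + 1) ∈ Set.Icc (0:ℝ) x := ⟨hμ0 (n + 1) (Nat.le_succ_of_le hn), hμx (n + 1)⟩
    have huv : μ n ≤ μ (n + 1) := hμmono n hn
    have hsplit : c n - c (n + 1) =
        (Complex.exp ((μ n : ℂ) * s₀) - Complex.exp ((μ (n + 1) : ℂ) * s₀)) *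
          (((x - μ n) ^ k : ℝ) : ℂ) +
        Complex.exp ((μ (n + 1) : ℂ) * s₀) *
          ((((x - μ n) ^ k : ℝ) : ℂ) - (((x - μ (n + 1)) ^ k : ℝ) : ℂ)) := by
      rw [hc]; ring
    rw [hsplit]
    refine le_trans (norm_add_le _ _) ?_
    simp only [norm_mul]
    have hterm1 : ‖Complex.exp ((μ n : ℂ) * s₀) - Complex.exp ((μ (n + 1) : ℂ) * s₀)‖
        * ‖(((x - μ n) ^ k : ℝ) : ℂ)‖ ≤
        E * ‖s₀‖ * x ^ k * (μ (n + 1) - μ n) := by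
      have h1' := exp_mvt s₀ x (μ n) (μ (n + 1)) hu hv huv E hEbd
      rw [Complex.norm_real, Real.norm_eq_abs]
      calc ‖Complex.exp ((μ n : ℂ) * s₀) - Complex.exp ((μ (n + 1) : ℂ) * s₀)‖
            * |(x - μ n) ^ k|
          ≤ (E * ‖s₀‖ * (μ (n + 1) - μ n)) * (x ^ k) :=
            mul_le_mul h1' (by rw [_root_.abs_of_nonneg (hrpow0 n)]; exact hrpowx n hn)
              (abs_nonneg _)
              (mul_nonneg (mul_nonneg hE0.le (norm_nonneg _)) (by linarith))
        _ = E * ‖s₀‖ * x ^ k * (μ (n + 1) - μ n) := by ring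
    have hterm2 : ‖Complex.exp ((μ (n + 1) : ℂ) * s₀)‖ *
        ‖(((x - μ n) ^ k : ℝ) : ℂ) - (((x - μ (n + 1)) ^ k : ℝ) : ℂ)‖ ≤
        E * ((x - μ n) ^ k - (x - μ (n + 1)) ^ k) := by
      have h2' : ‖(((x - μ n) ^ k : ℝ) : ℂ) - (((x - μ (n + 1)) ^ k : ℝ) : ℂ)‖ =
          (x - μ n) ^ k - (x - μ (n + 1)) ^ k := by
        rw [← Complex.ofReal_sub, Complex.norm_real, Real.norm_eq_abs,
          _root_.abs_of_nonneg (by linarith [hrpowmono n hn] :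
            (0:ℝ) ≤ (x - μ n) ^ k - (x - μ (n + 1)) ^ k)]
      rw [h2']
      exact mul_le_mul_of_nonneg_right (hEbd _ hv) (by linarith [hrpowmono n hn])
    exact add_le_add hterm1 hterm2
  have habsB : ∀ n : ℕ, ‖∑ m ∈ Finset.Icc 1 n, b m‖ ≤ C := fun n => by
    rw [hB]; exact hC n
  refine le_trans (norm_add_le _ _) ?_
  have hA1 : ‖c (N + 1) * ∑ m ∈ Finset.Icc 1 N, b m‖ ≤ E * x ^ k * C := by
    rw [norm_mul]
    exact mul_le_mul (habs_c (N + 1) (Nat.le_add_left 1 N)) (habsB N) (norm_nonneg _)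
      (by positivity)
  have hA2 : ‖∑ n ∈ Finset.Icc 1 N, (c n - c (n + 1)) * (∑ m ∈ Finset.Icc 1 n, b m)‖
      ≤ (E * ‖s₀‖ * x ^ k * x + E * x ^ k) * C := by
    refine le_trans (norm_sum_le _ _) ?_
    have step : ∀ n ∈ Finset.Icc 1 N,
        ‖(c n - c (n + 1)) * (∑ m ∈ Finset.Icc 1 n, b m)‖ ≤
          (E * ‖s₀‖ * x ^ k * (μ (n + 1) - μ n) +
            E * ((x - μ n) ^ k - (x - μ (n + 1)) ^ k)) * C := by
      intro n hn
      have hn1 : 1 ≤ n := (Finset.mem_Icc.1 hn).1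
      rw [norm_mul]
      refine mul_le_mul (hdiff n hn1) (habsB n) (norm_nonneg _) ?_
      have h01 : 0 ≤ μ (n + 1) - μ n := by linarith [hμmono n hn1]
      have h02 : 0 ≤ (x - μ n) ^ k - (x - μ (n + 1)) ^ k := by linarith [hrpowmono n hn1]
      positivity
    refine le_trans (Finset.sum_le_sum step) ?_
    rw [← Finset.sum_mul]
    refine mul_le_mul_of_nonneg_right ?_ hC0
    rw [Finset.sum_add_distrib, ← Finset.mul_sum, ← Finset.mul_sum,
      telescope_sum μ N, telescope_sum' (fun n => (x - μ n) ^ k) N]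
    have hfin1 : μ (N + 1) - μ 1 ≤ x := by linarith [hμx (N + 1), hμ0 1 le_rfl]
    have hfin2 : (x - μ 1) ^ k - (x - μ (N + 1)) ^ k ≤ x ^ k := by
      linarith [hrpowx 1 le_rfl, hrpow0 (N + 1)]
    refine add_le_add ?_ ?_
    · exact mul_le_mul_of_nonneg_left hfin1 (by positivity)
    · exact mul_le_mul_of_nonneg_left hfin2 hE0.le
  calc ‖c (N + 1) * ∑ m ∈ Finset.Icc 1 N, b m‖ +
        ‖∑ n ∈ Finset.Icc 1 N, (c n - c (n + 1)) * (∑ m ∈ Finset.Icc 1 n, b m)‖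
      ≤ E * x ^ k * C + (E * ‖s₀‖ * x ^ k * x + E * x ^ k) * C :=
        add_le_add hA1 hA2
    _ = C * E * (x ^ k * (2 + ‖s₀‖ * x)) := by ring

theorem riesz_sum_integrable (lam : ℕ → ℝ) (a : ℕ → ℂ) (hfreq : IsFrequency lam)
    (s₀ : ℂ) (hconv : ∃ L : ℂ, Tendsto (fun N => partialSum lam a N s₀) atTop (nhds L)) :
    ∀ σ : ℝ, max 0 s₀.re < σ → ∀ k : ℝ, 0 ≤ k →
      Integrable (fun x : ℝ => Real.exp (-σ * x) •
        ∑' n : ℕ, if 1 ≤ n ∧ lam n < x then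
          a n * (((x - lam n) ^ k : ℝ) : ℂ) else 0) := by
  intro σ hσ k hk
  obtain ⟨L, hL⟩ := hconv
  obtain ⟨hstrict, h1, htop⟩ := hfreq
  have hmono : ∀ m n : ℕ, 1 ≤ m → m ≤ n → lam m ≤ lam n := by
    intro m n hm hmn
    induction n, hmn using Nat.le_induction with
    | base => exact le_rfl
    | succ n hmn ih => exact ih.trans (hstrict n (hm.trans hmn)).le
  obtain ⟨C, hC⟩ : ∃ C : ℝ, ∀ N, ‖partialSum lam a N s₀‖ ≤ C := by
    have htd : Tendsto (fun N => ‖partialSum lam a N s₀‖) atTop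
        (𝓝 (‖L‖)) := (continuous_norm.tendsto L).comp hL
    obtain ⟨C, hCb⟩ := htd.bddAbove_range
    exact ⟨C, fun N => hCb (Set.mem_range_self N)⟩
  have hC0 : 0 ≤ C := le_trans (by simp [partialSum]) (hC 0)
  set σ' : ℝ := max 0 s₀.re with hσ'def
  set ε : ℝ := σ - σ' with hεdef
  have hε : 0 < ε := sub_pos.2 hσ
  set f : ℕ → ℝ → ℂ := fun n x =>
    if 1 ≤ n ∧ lam n < x then a n * (((x - lam n) ^ k : ℝ) : ℂ) else 0 with hf
  have hMx : ∀ x : ℝ, ∃ M : ℕ, ∀ n, M ≤ n → x ≤ lam n := fun x =>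
    eventually_atTop.1 (htop.eventually_ge_atTop x)
  have hsum : ∀ x : ℝ, Summable (fun n => f n x) := by
    intro x
    obtain ⟨M, hM⟩ := hMx x
    apply summable_of_ne_finset_zero (s := Finset.range (M + 1))
    intro n hn
    have hMn : M ≤ n := by
      have := Finset.mem_range.not.1 hn
      omega
    exact if_neg (fun hcond => absurd hcond.2 (not_lt.2 (hM n hMn)))
  have hfm : ∀ n : ℕ, Measurable (f n) := by
    intro n
    by_cases hn : 1 ≤ n
    · have hinner : Measurable fun x : ℝ => a n * (((x - lam n) ^ k : ℝ) : ℂ) :=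
        (Complex.measurable_ofReal.comp
          ((Real.continuous_rpow_const hk).measurable.comp
            (measurable_id.sub_const (lam n)))).const_mul (a n)
      simp only [hf, hn, true_and]
      exact Measurable.ite measurableSet_Ioi hinner measurable_const
    · simp only [hf, hn, false_and, if_false]
      exact measurable_const
  have hFm : AEStronglyMeasurable (fun x : ℝ => ∑' n, f n x) volume := by
    apply aestronglyMeasurable_of_tendsto_ae (f := fun N x => ∑ n ∈ Finset.range N, f n x) atTop
    · exact fun N => (Finset.measurable_sum _ fun n _ => hfm n).aestronglyMeasurable
    · exact ae_of_all _ fun x => (hsum x).hasSum.tendsto_sum_nat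
  -- bound constant D
  have hψ : Tendsto (fun x : ℝ => x ^ k * (2 + ‖s₀‖ * x) * Real.exp (-(ε/2) * x))
      atTop (𝓝 0) := by
    have h1t := tendsto_rpow_mul_exp_neg_mul_atTop_nhds_zero k (ε/2) (by linarith)
    have h2t := tendsto_rpow_mul_exp_neg_mul_atTop_nhds_zero (k+1) (ε/2) (by linarith)
    have hcomb := (h1t.const_mul 2).add (h2t.const_mul (‖s₀‖))
    rw [mul_zero, mul_zero, add_zero] at hcomb
    refine Filter.Tendsto.congr' ?_ hcomb
    filter_upwards [eventually_gt_atTop (0:ℝ)] with x hx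
    rw [Real.rpow_add_one hx.ne' k]; ring
  obtain ⟨A0, hA0⟩ : ∃ A0 : ℝ, ∀ x ≥ A0,
      x ^ k * (2 + ‖s₀‖ * x) * Real.exp (-(ε/2) * x) ≤ 1 :=
    eventually_atTop.1 (hψ.eventually (eventually_le_nhds (by norm_num : (0:ℝ) < 1)))
  set A : ℝ := max A0 1 with hAdef
  have hA1 : (0:ℝ) ≤ A := le_trans zero_le_one (le_max_right A0 1)
  set D : ℝ := max 1 (A ^ k * (2 + ‖s₀‖ * A)) with hDdef
  have hD0 : (0:ℝ) ≤ D := le_trans zero_le_one (le_max_left _ _)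
  have hDbd : ∀ x : ℝ, 0 < x →
      x ^ k * (2 + ‖s₀‖ * x) * Real.exp (-(ε/2) * x) ≤ D := by
    intro x hx0
    rcases le_total A x with hxA | hxA
    · exact le_trans (hA0 x (le_trans (le_max_left _ _) hxA)) (le_max_left _ _)
    · refine le_trans ?_ (le_max_right _ _)
      have e1 : x ^ k ≤ A ^ k := Real.rpow_le_rpow hx0.le hxA hk
      have e2 : 2 + ‖s₀‖ * x ≤ 2 + ‖s₀‖ * A := by
        have := mul_le_mul_of_nonneg_left hxA (norm_nonneg s₀); linarith
      have e3 : Real.exp (-(ε/2) * x) ≤ 1 := by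
        rw [← Real.exp_zero]
        exact Real.exp_le_exp.2 (by nlinarith)
      have hAk : 0 ≤ A ^ k := Real.rpow_nonneg hA1 k
      have h2x : 0 ≤ 2 + ‖s₀‖ * x := by
        have := mul_nonneg (norm_nonneg s₀) hx0.le; linarith
      calc x ^ k * (2 + ‖s₀‖ * x) * Real.exp (-(ε/2) * x)
          ≤ x ^ k * (2 + ‖s₀‖ * x) * 1 := by
            refine mul_le_mul_of_nonneg_left e3 ?_
            exact mul_nonneg (Real.rpow_nonneg hx0.le k) h2x
        _ = x ^ k * (2 + ‖s₀‖ * x) := mul_one _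
        _ ≤ A ^ k * (2 + ‖s₀‖ * A) := mul_le_mul e1 e2 h2x hAk
  -- dominating function
  set g : ℝ → ℝ := Set.indicator (Set.Ioi (0:ℝ))
    (fun x => (C * D) * Real.exp (-(ε/2) * x)) with hg
  have hgint : Integrable g volume := by
    refine IntegrableOn.integrable_indicator ?_ measurableSet_Ioi
    exact (exp_neg_integrableOn_Ioi 0 (by linarith : (0:ℝ) < ε/2)).const_mul (C * D)
  refine Integrable.mono' hgint ?_ (ae_of_all _ fun x => ?_)
  · exact ((Real.continuous_exp.comp
      (continuous_const.mul continuous_id)).aestronglyMeasurable).smul hFm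
  rcases le_or_gt x 0 with hx0 | hx0
  · have hzero : ∀ n : ℕ, f n x = 0 := by
      intro n
      refine if_neg ?_
      rintro ⟨hn1, hnx⟩
      have : 0 ≤ lam n := le_trans h1 (hmono 1 n le_rfl hn1)
      linarith
    have htz : (∑' n, f n x) = 0 := by
      rw [tsum_congr hzero]; exact tsum_zero
    show ‖Real.exp (-σ * x) • ∑' n, f n x‖ ≤ g x
    rw [htz, smul_zero, norm_zero, hg,
      Set.indicator_of_notMem (by simpa using hx0)]
  · obtain ⟨M, hM⟩ := hMx x
    set N : ℕ := Nat.findGreatest (fun n => lam n < x) M with hNdef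
    have hmem : ∀ n : ℕ, n ∈ Finset.Icc 1 N ↔ (1 ≤ n ∧ lam n < x) := by
      intro n
      rw [Finset.mem_Icc]
      constructor
      · rintro ⟨hn1, hnN⟩
        refine ⟨hn1, ?_⟩
        have hN0 : N ≠ 0 := by omega
        have hPN : lam N < x := Nat.findGreatest_of_ne_zero hNdef.symm hN0
        exact lt_of_le_of_lt (hmono n N hn1 hnN) hPN
      · rintro ⟨hn1, hnx⟩
        refine ⟨hn1, Nat.le_findGreatest ?_ hnx⟩
        by_contra hcon
        push_neg at hcon
        exact absurd (hM n (by omega)) (not_le.2 hnx)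
    have htsum : (∑' n, f n x) =
        ∑ n ∈ Finset.Icc 1 N, a n * (((x - lam n) ^ k : ℝ) : ℂ) := by
      rw [tsum_eq_sum (s := Finset.Icc 1 N)
        (fun n hn => if_neg (fun hc => hn ((hmem n).2 hc)))]
      exact Finset.sum_congr rfl fun n hn => if_pos ((hmem n).1 hn)
    have hkey := key_bound lam a s₀ hmono h1 C hC x k hx0 hk N
      (fun n hn => ((hmem n).1 hn).2)
    show ‖Real.exp (-σ * x) • ∑' n, f n x‖ ≤ g x
    rw [htsum, norm_smul, Real.norm_eq_abs, _root_.abs_of_pos (Real.exp_pos _),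
      hg, Set.indicator_of_mem (Set.mem_Ioi.2 hx0)]
    have hexpeq : Real.exp (-σ * x) * Real.exp (σ' * x) =
        Real.exp (-(ε/2) * x) * Real.exp (-(ε/2) * x) := by
      rw [← Real.exp_add, ← Real.exp_add]
      congr 1
      rw [hεdef]; ring
    calc Real.exp (-σ * x) *
          ‖∑ n ∈ Finset.Icc 1 N, a n * (((x - lam n) ^ k : ℝ) : ℂ)‖
        ≤ Real.exp (-σ * x) *
            (C * Real.exp (σ' * x) * (x ^ k * (2 + ‖s₀‖ * x))) :=
          mul_le_mul_of_nonneg_left hkey (Real.exp_pos _).le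
      _ = C * (x ^ k * (2 + ‖s₀‖ * x) * Real.exp (-(ε/2) * x)) *
            Real.exp (-(ε/2) * x) := by
          linear_combination (C * (x ^ k * (2 + ‖s₀‖ * x))) * hexpeq
      _ ≤ C * D * Real.exp (-(ε/2) * x) := by
          refine mul_le_mul_of_nonneg_right ?_ (Real.exp_pos _).le
          exact mul_le_mul_of_nonneg_left (hDbd x hx0) hC0
end

section
/- Let λ be a frequency, (a_n) complex coefficients and 0 < k ≤ 1. Suppose u ≥ 0 and the Riesz means R_x^k converge uniformly on the half-plane {s : Re s > u} as x → ∞ (i.e. they are uniformly Cauchy there as x → ∞). Then limsup_{x→∞} (1/x) · log( sup_{t ∈ ℝ} |R_x^k(it)| ) ≤ u. -/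
open Filter Finset Complex MeasureTheory Topology

/-- Riesz mean of order `k`: `R_x^k(s) = ∑_{λ_n < x} a_n (1 − λ_n/x)^k e^{−λ_n s}`
(a finite sum whenever `λ` is a frequency). -/
noncomputable def rieszMean (lam : ℕ → ℝ) (a : ℕ → ℂ) (k x : ℝ) (s : ℂ) : ℂ :=
  ∑' n : ℕ, if 1 ≤ n ∧ lam n < x then
    a n * (((1 - lam n / x) ^ k : ℝ) : ℂ) * Complex.exp (-(lam n : ℂ) * s) else 0

lemma lam_nonneg' {lam : ℕ → ℝ} (h : IsFrequency lam) {n : ℕ} (hn : 1 ≤ n) : 0 ≤ lam n := by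
  obtain ⟨hmono, h1, -⟩ := h
  refine h1.trans ?_
  induction n with
  | zero => omega
  | succ m ih =>
    rcases Nat.eq_zero_or_pos m with rfl | hm
    · exact le_refl _
    · exact (ih hm).trans (le_of_lt (hmono m hm))

lemma riesz_rep {lam : ℕ → ℝ} (hfreq : IsFrequency lam) (a : ℕ → ℂ) (k x : ℝ) :
    ∃ N : ℕ, ∀ s : ℂ, rieszMean lam a k x s =
      ∑ n ∈ Finset.Icc 1 N, if 1 ≤ n ∧ lam n < x then
        a n * (((1 - lam n / x) ^ k : ℝ) : ℂ) * Complex.exp (-(lam n : ℂ) * s) else 0 := by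
  obtain ⟨N, hN⟩ := eventually_atTop.1 (hfreq.2.2.eventually_ge_atTop x)
  refine ⟨N, fun s => tsum_eq_sum ?_⟩
  intro n hn
  rw [Finset.mem_Icc] at hn
  rw [if_neg]
  rintro ⟨h1, h2⟩
  exact absurd (hN n (by omega)) (not_le.2 h2)

lemma term_abs_le {lam : ℕ → ℝ} (hfreq : IsFrequency lam) (a : ℕ → ℂ) {k : ℝ} (hk0 : 0 ≤ k)
    (x : ℝ) (n : ℕ) (s : ℂ) :
    ‖if 1 ≤ n ∧ lam n < x then
        a n * (((1 - lam n / x) ^ k : ℝ) : ℂ) * Complex.exp (-(lam n : ℂ) * s) else 0‖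
      ≤ if 1 ≤ n ∧ lam n < x then ‖a n‖ * Real.exp (-(lam n) * s.re) else 0 := by
  split_ifs with h
  · obtain ⟨h1, h2⟩ := h
    have hlnn : 0 ≤ lam n := lam_nonneg' hfreq h1
    have hx : 0 < x := lt_of_le_of_lt hlnn h2
    have hb0 : (0:ℝ) ≤ 1 - lam n / x := by
      rw [sub_nonneg]
      exact (div_le_one hx).2 h2.le
    have hr0 : (0:ℝ) ≤ (1 - lam n / x) ^ k := Real.rpow_nonneg hb0 k
    have hr1 : (1 - lam n / x) ^ k ≤ 1 := Real.rpow_le_one hb0 (sub_le_self _ (div_nonneg hlnn hx.le)) hk0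
    have hre : (-(lam n : ℂ) * s).re = -(lam n) * s.re := by simp
    rw [norm_mul, norm_mul, Complex.norm_of_nonneg hr0, Complex.norm_exp, hre]
    have := mul_le_of_le_one_right (norm_nonneg (a n)) hr1
    exact mul_le_mul_of_nonneg_right this (Real.exp_nonneg _)
  · simp

lemma riesz_key {lam : ℕ → ℝ} {a : ℕ → ℂ} {k : ℝ} (hfreq : IsFrequency lam) (hk0 : 0 ≤ k)
    {u C x b : ℝ} (hu : 0 ≤ u) (hC1 : 1 ≤ C) (hb : u < b)
    (hC : ∀ s : ℂ, u < s.re → ‖rieszMean lam a k x s‖ ≤ C) (t : ℝ) :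
    ‖rieszMean lam a k x ((t : ℂ) * I)‖ ≤ C * Real.exp (x * b) := by
  have hb0 : 0 < b := lt_of_le_of_lt hu hb
  have hCpos : 0 < C := lt_of_lt_of_le one_pos hC1
  obtain ⟨N, hrep⟩ := riesz_rep hfreq a k x
  set F : ℂ → ℂ := fun s => Complex.exp ((x : ℂ) * s) * rieszMean lam a k x s with hFdef
  -- differentiability
  have hFdiff : Differentiable ℂ F := by
    have hFeq : F = fun s => Complex.exp ((x : ℂ) * s) *
        ∑ n ∈ Finset.Icc 1 N, if 1 ≤ n ∧ lam n < x then
          a n * (((1 - lam n / x) ^ k : ℝ) : ℂ) * Complex.exp (-(lam n : ℂ) * s) else 0 :=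
      funext fun s => by rw [hFdef]; simp only [hrep s]
    rw [hFeq]
    refine (Complex.differentiable_exp.comp (differentiable_id.const_mul _)).mul
      (Differentiable.fun_sum fun n _ => ?_)
    by_cases h : 1 ≤ n ∧ lam n < x
    · simp only [if_pos h]
      exact (differentiable_const _).mul
        (Complex.differentiable_exp.comp (differentiable_id.const_mul _))
    · simp only [if_neg h]
      exact differentiable_const 0
  -- pointwise bound via Psi
  set Psi : ℝ → ℝ := fun σ => ∑ n ∈ Finset.Icc 1 N,
    if 1 ≤ n ∧ lam n < x then ‖a n‖ * Real.exp (-(lam n) * σ) else 0 with hPsidef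
  have hGs : ∀ s : ℂ, ‖rieszMean lam a k x s‖ ≤ Psi s.re := by
    intro s
    rw [hrep s]
    exact (norm_sum_le _ _).trans
      (Finset.sum_le_sum fun n _ => term_abs_le hfreq a hk0 x n s)
  have hFabs : ∀ s : ℂ, ‖F s‖
      = Real.exp (x * s.re) * ‖rieszMean lam a k x s‖ := by
    intro s
    rw [hFdef]
    simp only [norm_mul, Complex.norm_exp]
    congr 2
    simp
  have hmul : ∀ σ : ℝ, Real.exp (x * σ) * Psi σ = ∑ n ∈ Finset.Icc 1 N,
      if 1 ≤ n ∧ lam n < x then ‖a n‖ * Real.exp ((x - lam n) * σ) else 0 := by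
    intro σ
    rw [hPsidef, Finset.mul_sum]
    refine Finset.sum_congr rfl fun n _ => ?_
    split_ifs with h
    · rw [show Real.exp (x * σ) * (‖a n‖ * Real.exp (-(lam n) * σ))
        = ‖a n‖ * (Real.exp (x * σ) * Real.exp (-(lam n) * σ)) from by ring,
        ← Real.exp_add]
      congr 1
      ring
    · simp
  -- uniform strip bound
  set D : ℝ := (∑ n ∈ Finset.Icc 1 N, if 1 ≤ n ∧ lam n < x then ‖a n‖ else 0)
      * Real.exp (x * b) with hDdef
  have hD : ∀ s : ℂ, s.re ≤ b → ‖F s‖ ≤ D := by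
    intro s hs
    rw [hFabs s]
    refine le_trans (mul_le_mul_of_nonneg_left (hGs s) (Real.exp_nonneg _)) ?_
    rw [hmul, hDdef, Finset.sum_mul]
    refine Finset.sum_le_sum fun n _ => ?_
    split_ifs with h
    · obtain ⟨h1, h2⟩ := h
      have hlnn : 0 ≤ lam n := lam_nonneg' hfreq h1
      refine mul_le_mul_of_nonneg_left (Real.exp_le_exp.2 ?_) (norm_nonneg _)
      nlinarith [mul_nonneg hlnn hb0.le,
        mul_le_mul_of_nonneg_left hs (sub_nonneg.2 h2.le)]
    · simp
  -- choose A for the left edge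
  set φ : ℝ → ℝ := fun A => ∑ n ∈ Finset.Icc 1 N,
    if 1 ≤ n ∧ lam n < x then ‖a n‖ * Real.exp ((x - lam n) * (-A)) else 0 with hφdef
  have hφ0 : Tendsto φ atTop (nhds 0) := by
    have : Tendsto φ atTop (nhds (∑ n ∈ Finset.Icc 1 N, (0:ℝ))) := by
      refine tendsto_finset_sum _ fun n _ => ?_
      by_cases h : 1 ≤ n ∧ lam n < x
      · simp only [if_pos h]
        have hpos : 0 < x - lam n := sub_pos.2 h.2
        have hexp : Tendsto (fun A : ℝ => Real.exp ((x - lam n) * (-A))) atTop (nhds 0) :=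
          Real.tendsto_exp_atBot.comp ((tendsto_neg_atTop_atBot).const_mul_atBot hpos)
        simpa using hexp.const_mul (‖a n‖)
      · simp only [if_neg h]
        exact tendsto_const_nhds
    simpa using this
  have hCexp : 0 < C * Real.exp (x * b) := by positivity
  obtain ⟨A, hAlt, hA1⟩ := ((hφ0.eventually_lt_const hCexp).and (eventually_ge_atTop (1:ℝ))).exists
  -- boundary bounds
  have hleft : ∀ z : ℂ, z.re = -A → ‖F z‖ ≤ C * Real.exp (x * b) := by
    intro z hz
    rw [hFabs z, hz]
    refine le_trans (mul_le_mul_of_nonneg_left (hGs z) (Real.exp_nonneg _)) ?_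
    rw [hz, hmul (-A)]
    exact le_of_lt hAlt
  have hright : ∀ z : ℂ, z.re = b → ‖F z‖ ≤ C * Real.exp (x * b) := by
    intro z hz
    rw [hFabs z, hz, mul_comm]
    exact mul_le_mul_of_nonneg_right (hC z (hz ▸ hb)) (Real.exp_nonneg _)
  -- Phragmen-Lindelof
  have hz0 : ((t : ℂ) * I).re = 0 := by simp
  have hPL : ‖F ((t : ℂ) * I)‖ ≤ C * Real.exp (x * b) := by
    refine PhragmenLindelof.vertical_strip (a := -A) (b := b)
      hFdiff.diffContOnCl ⟨0, div_pos Real.pi_pos (by linarith), 0, ?_⟩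
      hleft hright (by rw [hz0]; linarith) (by rw [hz0]; exact hb0.le)
    rw [Asymptotics.isBigO_iff]
    refine ⟨D, ?_⟩
    rw [eventually_inf_principal]
    refine Eventually.of_forall fun z hz => ?_
    have : ‖F z‖ ≤ D := by exact hD z (le_of_lt hz.2)
    simpa using this
  have : ‖F ((t : ℂ) * I)‖ = ‖rieszMean lam a k x ((t : ℂ) * I)‖ := by
    rw [hFabs, hz0]
    simp
  rw [← this]
  exact hPL

theorem riesz_uniform_summability_abscissa_converse (lam : ℕ → ℝ) (a : ℕ → ℂ)
    (hfreq : IsFrequency lam) (k : ℝ) (hk0 : 0 < k) (hk1 : k ≤ 1)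
    (u : ℝ) (hu : 0 ≤ u)
    (hcauchy : ∀ δ : ℝ, 0 < δ → ∃ x₀ : ℝ, ∀ x : ℝ, x₀ ≤ x → ∀ y : ℝ, x₀ ≤ y →
      ∀ s : ℂ, u < s.re →
        ‖rieszMean lam a k x s - rieszMean lam a k y s‖ ≤ δ) :
    ∀ ε : ℝ, 0 < ε → ∀ᶠ x : ℝ in atTop,
      (1 / x) * Real.log (⨆ t : ℝ, ‖rieszMean lam a k x (t * I)‖) ≤ u + ε := by
  intro ε hε
  obtain ⟨x₁, hx₁⟩ := hcauchy 1 one_pos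
  obtain ⟨N₀, hN₀⟩ := riesz_rep hfreq a k x₁
  set C : ℝ := 1 + ∑ n ∈ Finset.Icc 1 N₀, ‖a n‖ with hCdef
  have hC1 : 1 ≤ C := le_add_of_nonneg_right (Finset.sum_nonneg fun n _ => norm_nonneg _)
  have hCbd : ∀ x : ℝ, x₁ ≤ x → ∀ s : ℂ, u < s.re →
      ‖rieszMean lam a k x s‖ ≤ C := by
    intro x hx s hs
    have h1 := hx₁ x hx x₁ le_rfl s hs
    have h2 : ‖rieszMean lam a k x₁ s‖
        ≤ ∑ n ∈ Finset.Icc 1 N₀, ‖a n‖ := by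
      rw [hN₀ s]
      refine (norm_sum_le _ _).trans (Finset.sum_le_sum fun n _ => ?_)
      refine (term_abs_le hfreq a hk0.le x₁ n s).trans ?_
      split_ifs with h
      · refine mul_le_of_le_one_right (norm_nonneg _) (Real.exp_le_one_iff.2 ?_)
        nlinarith [mul_nonneg (lam_nonneg' hfreq h.1) (le_trans hu hs.le)]
      · exact norm_nonneg _
    calc ‖rieszMean lam a k x s‖
        = ‖(rieszMean lam a k x s - rieszMean lam a k x₁ s)
            + rieszMean lam a k x₁ s‖ := by congr 1; ring
      _ ≤ ‖rieszMean lam a k x s - rieszMean lam a k x₁ s‖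
            + ‖rieszMean lam a k x₁ s‖ := norm_add_le _ _
      _ ≤ C := by rw [hCdef]; exact add_le_add h1 h2
  have hb : u < u + ε / 2 := by linarith
  have hb0 : 0 < u + ε / 2 := by linarith
  have hCpos : 0 < C := lt_of_lt_of_le one_pos hC1
  filter_upwards [eventually_ge_atTop x₁, eventually_ge_atTop (1 : ℝ),
    eventually_ge_atTop (2 * Real.log C / ε)] with x hx hx1 hx2
  have hxpos : (0 : ℝ) < x := lt_of_lt_of_le one_pos hx1
  have hkey := riesz_key hfreq hk0.le hu hC1 hb (hCbd x hx)
  set S : ℝ := ⨆ t : ℝ, ‖rieszMean lam a k x ((t : ℂ) * I)‖ with hSdef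
  have hS1 : S ≤ C * Real.exp (x * (u + ε / 2)) := ciSup_le fun t => hkey t
  have hS0 : 0 ≤ S := Real.iSup_nonneg fun t => norm_nonneg _
  have hlog : Real.log S ≤ Real.log C + x * (u + ε / 2) := by
    rcases eq_or_lt_of_le hS0 with h0 | h0
    · rw [← h0, Real.log_zero]
      have := Real.log_nonneg hC1
      nlinarith
    · calc Real.log S ≤ Real.log (C * Real.exp (x * (u + ε / 2))) := Real.log_le_log h0 hS1
        _ = Real.log C + x * (u + ε / 2) := by
            rw [Real.log_mul (ne_of_gt hCpos) (Real.exp_ne_zero _), Real.log_exp]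
  have hmain : (1 / x) * Real.log S ≤ (1 / x) * (Real.log C + x * (u + ε / 2)) :=
    mul_le_mul_of_nonneg_left hlog (by positivity)
  have heq : (1 / x) * (Real.log C + x * (u + ε / 2)) = Real.log C / x + (u + ε / 2) := by
    field_simp
  have hlogx : Real.log C / x ≤ ε / 2 := by
    rw [div_le_iff₀ hε] at hx2
    rw [div_le_iff₀ hxpos]
    linarith
  calc (1 / x) * Real.log S ≤ Real.log C / x + (u + ε / 2) := by rw [← heq]; exact hmain
    _ ≤ u + ε := by linarith
end

section
/- (Bohr–Cahen formula for the abscissa of uniform convergence.) Let λ be a frequency and (a_n) complex coefficients, and set L := limsup_{N→∞} (1/λ_N) · log( sup_{t ∈ ℝ} |∑_{n=1}^N a_n e^{−i λ_n t}| ). If L < ∞, then for every ε > 0 the series ∑_n a_n e^{−λ_n s} converges uniformly on the half-plane {s : Re s > L + ε} (its partial sums are uniformly Cauchy there). -/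
open Filter Finset Complex MeasureTheory Topology

lemma exp_split (x : ℝ) (s : ℂ) :
    Complex.exp (-(x:ℂ) * s) = Complex.exp (-(x:ℂ) * (s.im * I)) * (Real.exp (-(x * s.re)) : ℝ) := by
  have h : -(x:ℂ) * s = -(x:ℂ) * (s.im * I) + ((-(x * s.re) : ℝ) : ℂ) := by
    have : s = (s.re : ℂ) + s.im * I := (Complex.re_add_im s).symm
    nth_rewrite 1 [this]
    push_cast
    ring
  rw [h, Complex.exp_add, Complex.ofReal_exp]

lemma abs_exp_im (x t : ℝ) : ‖Complex.exp (-(x:ℂ) * ((t:ℂ) * I))‖ = 1 := by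
  rw [Complex.norm_exp]; simp

lemma star_shaped {d b a : ℝ} (hb : 0 < b) (hba : b ≤ a) :
    (b/a) * (1 - Real.exp (-(d*a))) ≤ 1 - Real.exp (-(d*b)) := by
  have ha : 0 < a := hb.trans_le hba
  have θpos : 0 ≤ b/a := by positivity
  have θle : b/a ≤ 1 := by rw [div_le_one ha]; exact hba
  have h := convexOn_exp.2 (Set.mem_univ (-(d*a))) (Set.mem_univ 0) θpos
    (show (0:ℝ) ≤ 1 - b/a by linarith) (by ring)
  simp only [smul_eq_mul, mul_zero, add_zero, Real.exp_zero, mul_one] at h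
  have h2 : (b/a) * (-(d*a)) = -(d*b) := by field_simp
  rw [h2] at h
  nlinarith

lemma exp_mul_inv (x : ℝ) : Real.exp x * Real.exp (-x) = 1 := by
  rw [← Real.exp_add]; simp

lemma exp_sub_one_le {x : ℝ} (hx : 0 ≤ x) : Real.exp x - 1 ≤ x * Real.exp x := by
  nlinarith [mul_le_mul_of_nonneg_left (Real.add_one_le_exp (-x)) (le_of_lt (Real.exp_pos x)),
    exp_mul_inv x]

lemma one_sub_exp_neg_ge {x : ℝ} (hx : 0 ≤ x) : x * Real.exp (-x) ≤ 1 - Real.exp (-x) := by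
  nlinarith [mul_le_mul_of_nonneg_left (Real.add_one_le_exp x) (le_of_lt (Real.exp_pos (-x))),
    exp_mul_inv x]


lemma telescope (u : ℕ → ℝ) (M : ℕ) : ∀ K, M ≤ K →
    ∑ n ∈ Finset.Ioc M K, (u n - u (n+1)) = u (M+1) - u (K+1) := by
  intro K hK
  induction K, hK using Nat.le_induction with
  | base => simp
  | succ K hK ih =>
      rw [Finset.sum_Ioc_succ_top (by omega), ih]; ring

lemma abel (c w : ℕ → ℂ) (M : ℕ) : ∀ N, M < N →
    ∑ n ∈ Finset.Ioc M N, c n * w n =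
      (∑ k ∈ Finset.Icc 1 N, c k) * w N - (∑ k ∈ Finset.Icc 1 M, c k) * w (M+1)
      + ∑ n ∈ Finset.Ioc M (N-1), (∑ k ∈ Finset.Icc 1 n, c k) * (w n - w (n+1)) := by
  intro N hN
  induction N, hN using Nat.le_induction with
  | base =>
      have h1 : Finset.Ioc M (M+1) = {M+1} := by ext x; simp only [Finset.mem_Ioc, Finset.mem_singleton]; omega
      have h2 : M + 1 - 1 = M := rfl
      rw [h1, Finset.sum_singleton, h2, Finset.Ioc_self, Finset.sum_empty,
        Finset.sum_Icc_succ_top (show 1 ≤ M + 1 by omega)]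
      ring
  | succ N hN ih =>
      rw [Finset.sum_Ioc_succ_top (by omega), ih,
        show N + 1 - 1 = (N-1) + 1 by omega,
        Finset.sum_Ioc_succ_top (by omega),
        show (N-1) + 1 = N by omega,
        Finset.sum_Icc_succ_top (show 1 ≤ N + 1 by omega)]
      ring

lemma key_pos {α ε σ d : ℝ} (hε : 0 < ε) (hσ : 0 < σ) (hβ : ε/2 < σ - α) (hd : 0 ≤ d) :
    1 - Real.exp (-(d*σ)) ≤ (1 + 2*|α|/ε) * (1 - Real.exp (-(d*(σ-α)))) := by
  set β := σ - α with hβdef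
  clear_value β
  have hβ0 : 0 < β := lt_trans (by positivity) hβ
  have hE1 : Real.exp (-(d*β)) ≤ 1 := Real.exp_le_one_iff.mpr (by nlinarith)
  have hC1 : (1:ℝ) ≤ 1 + 2*|α|/ε := by
    have : (0:ℝ) ≤ 2*|α|/ε := by positivity
    linarith
  have hC : σ / β ≤ 1 + 2*|α|/ε := by
    rw [div_le_iff₀ hβ0]
    have h1 : |α| * (ε/2) ≤ |α| * β := mul_le_mul_of_nonneg_left (le_of_lt hβ) (abs_nonneg α)
    have h2 : α ≤ |α| := le_abs_self α
    have h3 : (2/ε)*((_root_.abs α)*(ε/2)) = _root_.abs α := by field_simp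
    have h4 := mul_le_mul_of_nonneg_left h1 (le_of_lt (show (0:ℝ) < 2/ε by positivity))
    rw [h3] at h4
    have hσβ : σ = β + α := by rw [hβdef]; ring
    have expand : (1 + 2*|α|/ε) * β = β + (2/ε)*(_root_.abs α * β) := by ring
    rw [expand]
    linarith
  rcases le_or_gt σ β with h | h
  · have e1 : Real.exp (-(d*β)) ≤ Real.exp (-(d*σ)) := by
      apply Real.exp_le_exp.mpr; nlinarith
    nlinarith
  · have hs := star_shaped hβ0 h.le (d := d)
    have hdivpos : (0:ℝ) ≤ σ/β := by positivity
    have := mul_le_mul_of_nonneg_left hs hdivpos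
    have hid : (σ/β) * ((β/σ) * (1 - Real.exp (-(d*σ)))) = 1 - Real.exp (-(d*σ))  := by
      field_simp
    rw [hid] at this
    calc 1 - Real.exp (-(d*σ)) ≤ (σ/β) * (1 - Real.exp (-(d*β))) := this
      _ ≤ (1 + 2*|α|/ε) * (1 - Real.exp (-(d*β))) :=
          mul_le_mul_of_nonneg_right hC (by nlinarith)

lemma key_neg {α ε σ d : ℝ} (hε : 0 < ε) (hσ : σ ≤ 0) (hβ : ε/2 < σ - α) (hd : 0 < d) :
    min (2 * Real.exp (-(d*(σ-α)))) (Real.exp (d*(-σ)) - 1)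
      ≤ (max 2 ((4*|α|/ε) * Real.exp (2*Real.log 2*|α|/ε))) * (1 - Real.exp (-(d*(σ-α)))) := by
  set β := σ - α with hβdef
  set σ' := -σ with hσ'def
  set C₂ := max 2 ((4*|α|/ε) * Real.exp (2*Real.log 2*|α|/ε)) with hC₂
  clear_value β σ' C₂
  have hβ0 : 0 < β := lt_trans (by positivity) hβ
  have hα0 : α < 0 := by simp only [hβdef] at hβ; linarith
  have hσ'0 : 0 ≤ σ' := by simp [hσ'def]; linarith
  have hσ'α : σ' ≤ |α| := by rw [abs_of_neg hα0]; simp [hσ'def]; linarith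
  have hC₂2 : (2:ℝ) ≤ C₂ := hC₂ ▸ le_max_left _ _
  have hE1 : Real.exp (-(d*β)) ≤ 1 := Real.exp_le_one_iff.mpr (by nlinarith)
  rcases le_or_gt (Real.exp (-(d*β))) (1/2) with h | h
  · calc min (2 * Real.exp (-(d*β))) (Real.exp (d*σ') - 1)
        ≤ 2 * Real.exp (-(d*β)) := min_le_left _ _
      _ ≤ 1 := by linarith
      _ ≤ 2 * (1 - Real.exp (-(d*β))) := by linarith
      _ ≤ C₂ * (1 - Real.exp (-(d*β))) := mul_le_mul_of_nonneg_right hC₂2 (by linarith)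
  · -- small gap : d*β < log 2
    have hdβ : d*β < Real.log 2 := by
      have := Real.log_lt_log (by positivity) h
      rw [Real.log_exp] at this
      have hl2 : Real.log (1/2) = -Real.log 2 := by
        rw [one_div, Real.log_inv]
      linarith [hl2 ▸ this]
    have hdσ' : d * σ' ≤ 2*Real.log 2*|α|/ε := by
      have hd2 : d < Real.log 2 / β := by rw [lt_div_iff₀ hβ0]; linarith [hdβ]
      have hβε : 1/β ≤ 2/ε := by
        rw [div_le_div_iff₀ hβ0 hε]; linarith
      have hlog2 : 0 ≤ Real.log 2 := Real.log_nonneg (by norm_num)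
      calc d * σ' ≤ (Real.log 2 / β) * σ' := by
            apply mul_le_mul_of_nonneg_right (le_of_lt hd2) hσ'0
        _ = Real.log 2 * σ' * (1/β) := by ring
        _ ≤ Real.log 2 * |α| * (2/ε) := by
            apply mul_le_mul (by nlinarith) hβε (by positivity) (by positivity)
        _ = 2*Real.log 2*|α|/ε := by ring
    have hmin : min (2 * Real.exp (-(d*β))) (Real.exp (d*σ') - 1)
        ≤ d * σ' * Real.exp (2*Real.log 2*|α|/ε) := by
      calc min (2 * Real.exp (-(d*β))) (Real.exp (d*σ') - 1)
          ≤ Real.exp (d*σ') - 1 := min_le_right _ _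
        _ ≤ (d*σ') * Real.exp (d*σ') := exp_sub_one_le (by positivity)
        _ ≤ (d*σ') * Real.exp (2*Real.log 2*|α|/ε) := by
            apply mul_le_mul_of_nonneg_left (Real.exp_le_exp.mpr hdσ') (by positivity)
    have hrhs : C₂ * (d * (ε/4)) ≤ C₂ * (1 - Real.exp (-(d*β))) := by
      apply mul_le_mul_of_nonneg_left _ (by linarith)
      calc d * (ε/4) ≤ (d*β) * (1/2) := by nlinarith
        _ ≤ (d*β) * Real.exp (-(d*β)) := by
            apply mul_le_mul_of_nonneg_left (le_of_lt h) (by positivity)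
        _ ≤ 1 - Real.exp (-(d*β)) := one_sub_exp_neg_ge (by positivity)
    refine hmin.trans (le_trans ?_ hrhs)
    have h4 : (4*|α|/ε) * Real.exp (2*Real.log 2*|α|/ε) ≤ C₂ := hC₂ ▸ le_max_right _ _
    calc d * σ' * Real.exp (2*Real.log 2*|α|/ε)
        ≤ d * |α| * Real.exp (2*Real.log 2*|α|/ε) := by
          apply mul_le_mul_of_nonneg_right _ (by positivity)
          exact mul_le_mul_of_nonneg_left hσ'α (by positivity)
      _ = ((4*|α|/ε) * Real.exp (2*Real.log 2*|α|/ε)) * (d * (ε/4)) := by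
          field_simp
      _ ≤ C₂ * (d * (ε/4)) := by
          apply mul_le_mul_of_nonneg_right h4 (by positivity)


lemma bohr (lam : ℕ → ℝ) (a : ℕ → ℂ) (n : ℕ) (hn : 1 ≤ n)
    (hmono : ∀ k, 1 ≤ k → k < n → lam k < lam n)
    (B : ℝ) (hB : ∀ t : ℝ, ‖partialSum lam a n ((t:ℂ) * I)‖ ≤ B) :
    ‖a n‖ ≤ B := by
  classical
  set c : ℕ → ℂ := fun k => ((lam n - lam k : ℝ) : ℂ) * I with hc
  -- the integrand identity
  have hig : ∀ t : ℝ, partialSum lam a n ((t:ℂ) * I) * Complex.exp ((lam n : ℂ) * I * t)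
      = ∑ k ∈ Finset.Icc 1 n, a k * Complex.exp (c k * t) := by
    intro t
    rw [partialSum, Finset.sum_mul]
    refine Finset.sum_congr rfl fun k _ => ?_
    rw [mul_assoc, ← Complex.exp_add]
    congr 1
    push_cast [hc]
    ring
  have hint : ∀ T : ℝ,
      (∫ t in (-T)..T, partialSum lam a n ((t:ℂ) * I) * Complex.exp ((lam n : ℂ) * I * t))
      = ∑ k ∈ Finset.Icc 1 n, a k * ∫ t in (-T)..T, Complex.exp (c k * t) := by
    intro T
    rw [intervalIntegral.integral_congr (g := fun t : ℝ => ∑ k ∈ Finset.Icc 1 n,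
        a k * Complex.exp (c k * t)) (fun t _ => hig t)]
    rw [intervalIntegral.integral_finset_sum]
    · exact Finset.sum_congr rfl fun k _ => intervalIntegral.integral_const_mul _ _
    · intro k _
      exact (show Continuous fun t : ℝ => a k * Complex.exp (c k * t) by fun_prop).intervalIntegrable _ _
  -- k = n term
  have hcn : c n = 0 := by simp [hc]
  have hvn : ∀ T : ℝ, (∫ t in (-T)..T, Complex.exp (c n * t)) = (2*T : ℝ) := by
    intro T
    simp only [hcn, zero_mul, Complex.exp_zero]
    rw [intervalIntegral.integral_const]
    push_cast
    ring_nf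
    simp [two_mul]
  -- k ≠ n terms bounded
  have hvk : ∀ k ∈ (Finset.Icc 1 n).erase n, ∀ T : ℝ,
      ‖∫ t in (-T)..T, Complex.exp (c k * t)‖ ≤ 2 / ‖c k‖ := by
    intro k hk T
    have hk' : 1 ≤ k ∧ k < n := by
      simp only [Finset.mem_erase, Finset.mem_Icc] at hk
      omega
    have hlt := hmono k hk'.1 hk'.2
    have hck : c k ≠ 0 := by
      simp only [hc]
      exact mul_ne_zero (Complex.ofReal_ne_zero.mpr (sub_ne_zero.mpr (ne_of_gt hlt)))
        Complex.I_ne_zero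
    have habs : ∀ x : ℝ, ‖Complex.exp (c k * x)‖ = 1 := by
      intro x
      have h3 : c k * (x:ℂ) = (((lam n - lam k) * x : ℝ) : ℂ) * I := by push_cast [hc]; ring
      rw [h3, Complex.norm_exp_ofReal_mul_I]
    have h2 : ‖Complex.exp (c k * (T:ℝ)) - Complex.exp (c k * ((-T : ℝ):ℂ))‖ ≤ 2 := by
      calc ‖Complex.exp (c k * (T:ℝ)) - Complex.exp (c k * ((-T : ℝ):ℂ))‖
          ≤ ‖Complex.exp (c k * (T:ℝ))‖ + ‖Complex.exp (c k * ((-T:ℝ):ℂ))‖ :=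
            norm_sub_le _ _
        _ ≤ 2 := by rw [habs T, habs (-T)]; norm_num
    rw [integral_exp_mul_complex hck, norm_div]
    have hpos : 0 < ‖c k‖ := norm_pos_iff.mpr hck
    exact (div_le_div_iff_of_pos_right hpos).mpr h2
  -- assemble
  set C : ℝ := ∑ k ∈ (Finset.Icc 1 n).erase n, ‖a k‖ * (2 / ‖c k‖) with hC
  set R : ℝ → ℂ := fun T => ∑ k ∈ (Finset.Icc 1 n).erase n,
    a k * ∫ t in (-T)..T, Complex.exp (c k * t) with hRdef
  have hnmem : n ∈ Finset.Icc 1 n := by simp [hn]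
  have hsplit : ∀ T : ℝ,
      (∫ t in (-T)..T, partialSum lam a n ((t:ℂ) * I) * Complex.exp ((lam n : ℂ) * I * t))
      = a n * (2*T : ℝ) + R T := by
    intro T
    rw [hint T, ← Finset.add_sum_erase _ _ hnmem, hvn T]
  have hR : ∀ T : ℝ, ‖R T‖ ≤ C := by
    intro T
    refine (norm_sum_le _ _).trans (Finset.sum_le_sum fun k hk => ?_)
    rw [norm_mul]
    exact mul_le_mul_of_nonneg_left (hvk k hk T) (norm_nonneg _)
  set F : ℝ → ℂ := fun T => (((2*T:ℝ) : ℂ))⁻¹ *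
    ∫ t in (-T)..T, partialSum lam a n ((t:ℂ) * I) * Complex.exp ((lam n : ℂ) * I * t) with hF
  have h1 : ∀ T : ℝ, 0 < T → ‖F T - a n‖ ≤ C / (2*T) := by
    intro T hT
    have h2T : ((2*T:ℝ) : ℂ) ≠ 0 := by
      simp only [ne_eq, Complex.ofReal_eq_zero]
      positivity
    have : F T - a n = (((2*T:ℝ) : ℂ))⁻¹ * R T := by
      rw [hF]
      simp only
      rw [hsplit T, mul_add]
      rw [show (((2*T:ℝ):ℂ))⁻¹ * (a n * ((2*T:ℝ):ℂ)) = a n by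
        rw [mul_comm (a n)]; exact inv_mul_cancel_left₀ h2T (a n)]
      ring
    rw [this, norm_mul, norm_inv, Complex.norm_real, Real.norm_eq_abs, abs_of_pos (by positivity), div_eq_inv_mul]
    exact mul_le_mul_of_nonneg_left (hR T) (by positivity)
  have h2 : ∀ T : ℝ, 0 < T → ‖F T‖ ≤ B := by
    intro T hT
    have hbound : ∀ x ∈ Set.uIoc (-T) T,
        ‖partialSum lam a n ((x:ℂ) * I) * Complex.exp ((lam n : ℂ) * I * x)‖ ≤ B := by
      intro x _
      rw [norm_mul]
      have he : ((lam n : ℂ)) * I * x = (((lam n * x : ℝ)) : ℂ) * I := by push_cast; ring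
      rw [he, Complex.norm_exp_ofReal_mul_I, mul_one]
      exact hB x
    have hni := intervalIntegral.norm_integral_le_of_norm_le_const hbound
    rw [hF]
    simp only
    rw [norm_mul, norm_inv, Complex.norm_real, Real.norm_eq_abs, abs_of_pos (by positivity)]
    have habsT : |T - (-T)| = 2*T := by rw [abs_of_pos (by linarith)]; ring
    rw [habsT] at hni
    calc (2*T)⁻¹ * ‖∫ t in (-T)..T, partialSum lam a n ((t:ℂ) * I) *
            Complex.exp ((lam n : ℂ) * I * t)‖
        ≤ (2*T)⁻¹ * (B * (2*T)) := by
          exact mul_le_mul_of_nonneg_left hni (by positivity)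
      _ = B := by field_simp
  have h3 : Tendsto F atTop (nhds (a n)) := by
    have hz : Tendsto (fun T : ℝ => C / (2*T)) atTop (nhds 0) :=
      tendsto_const_nhds.div_atTop (Tendsto.const_mul_atTop two_pos tendsto_id)
    have hd : Tendsto (fun T => F T - a n) atTop (nhds 0) := by
      apply squeeze_zero_norm' _ hz
      filter_upwards [eventually_gt_atTop (0:ℝ)] with T hT
      exact h1 T hT
    have := hd.add (tendsto_const_nhds (x := a n))
    simpa using this
  have h4 : Tendsto (fun T => ‖F T‖) atTop (nhds (‖a n‖)) :=
    (continuous_norm.tendsto _).comp h3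
  apply le_of_tendsto h4
  filter_upwards [eventually_gt_atTop (0:ℝ)] with T hT
  exact h2 T hT



set_option maxHeartbeats 2000000 in
/-- Bohr–Cahen formula for the abscissa of uniform convergence. -/
theorem bohr_cahen_uniform (lam : ℕ → ℝ) (a : ℕ → ℂ) (hfreq : IsFrequency lam)
    (hbd : IsBoundedUnder (· ≤ ·) atTop (fun N : ℕ =>
      (1 / lam N) * Real.log (⨆ t : ℝ, ‖partialSum lam a N (t * I)‖))) :
    ∀ ε : ℝ, 0 < ε → ∀ δ : ℝ, 0 < δ → ∃ N₀ : ℕ, ∀ N : ℕ, N₀ ≤ N → ∀ M : ℕ, N₀ ≤ M →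
      ∀ s : ℂ,
        (limsup (fun N : ℕ =>
          (1 / lam N) * Real.log (⨆ t : ℝ, ‖partialSum lam a N (t * I)‖)) atTop)
            + ε < s.re →
        ‖partialSum lam a N s - partialSum lam a M s‖ ≤ δ := by
  obtain ⟨hmono, hlam1, htend⟩ := hfreq
  intro ε hε δ hδ
  have hchain : ∀ k m : ℕ, 1 ≤ k → k < m → lam k < lam m := by
    intro k m hk hkm
    induction m, hkm using Nat.le_induction with
    | base => exact hmono k hk
    | succ m hm ih => exact ih.trans (hmono m (by omega))
  set f := fun N : ℕ => (1 / lam N) * Real.log (⨆ t : ℝ,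
    ‖partialSum lam a N ((t:ℂ) * I)‖) with hfdef
  set L := limsup f atTop with hLdef
  set α := L + ε/2 with hαdef
  have hev1 : ∀ᶠ N in atTop, f N < α :=
    eventually_lt_of_limsup_lt (by rw [hαdef]; linarith) hbd
  have hev2 : ∀ᶠ N in atTop, 1 ≤ lam N := htend.eventually_ge_atTop 1
  set C₁ := 1 + 2*|α|/ε with hC₁def
  set C₂ := max 2 ((4*|α|/ε) * Real.exp (2*Real.log 2*|α|/ε)) with hC₂def
  set K := 3 + C₁ + C₂ with hKdef
  have hC₁0 : (1:ℝ) ≤ C₁ := by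
    rw [hC₁def]
    have : (0:ℝ) ≤ 2*|α|/ε := by positivity
    linarith
  have hC₂0 : (2:ℝ) ≤ C₂ := le_max_left _ _
  have hK0 : (0:ℝ) < K := by rw [hKdef]; linarith
  set R := (2/ε) * Real.log (K/δ) with hRdef
  have hev3 : ∀ᶠ N in atTop, R ≤ lam N := htend.eventually_ge_atTop R
  obtain ⟨N₁, hN₁⟩ := eventually_atTop.mp ((hev1.and hev2).and hev3)
  -- pointwise bounds
  have hT : ∀ n, N₁ ≤ n → 1 ≤ n → ∀ t : ℝ,
      ‖partialSum lam a n ((t:ℂ) * I)‖ ≤ Real.exp (lam n * α) := by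
    intro n hn hn1 t
    obtain ⟨⟨hfn, hln⟩, _⟩ := hN₁ n hn
    have hlam0 : (0:ℝ) < lam n := by linarith
    simp only [hfdef] at hfn
    have hbdd : BddAbove (Set.range fun t : ℝ =>
        ‖partialSum lam a n ((t:ℂ) * I)‖) := by
      refine ⟨∑ k ∈ Finset.Icc 1 n, ‖a k‖, ?_⟩
      rintro x ⟨t, rfl⟩
      refine (norm_sum_le _ _).trans (le_of_eq (Finset.sum_congr rfl fun k _ => ?_))
      rw [norm_mul, abs_exp_im, mul_one]
    have hle : ‖partialSum lam a n ((t:ℂ) * I)‖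
        ≤ ⨆ t : ℝ, ‖partialSum lam a n ((t:ℂ)*I)‖ := le_ciSup hbdd t
    have hlogQ : Real.log (⨆ t : ℝ, ‖partialSum lam a n ((t:ℂ)*I)‖)
        < lam n * α := by
      have h2 : Real.log (⨆ t : ℝ, ‖partialSum lam a n ((t:ℂ)*I)‖)
          = lam n * ((1/lam n) * Real.log (⨆ t : ℝ,
            ‖partialSum lam a n ((t:ℂ)*I)‖)) := by
        rw [← mul_assoc, mul_one_div_cancel hlam0.ne', one_mul]
      rw [h2]
      exact mul_lt_mul_of_pos_left hfn hlam0
    have hQle : (⨆ t : ℝ, ‖partialSum lam a n ((t:ℂ)*I)‖)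
        ≤ Real.exp (lam n * α) := by
      rcases le_or_gt (⨆ t : ℝ, ‖partialSum lam a n ((t:ℂ)*I)‖) 0 with h|h
      · exact h.trans (Real.exp_pos _).le
      · exact ((Real.log_lt_iff_lt_exp h).mp hlogQ).le
    exact hle.trans hQle
  have hA : ∀ n, N₁ ≤ n → 1 ≤ n → ‖a n‖ ≤ Real.exp (lam n * α) :=
    fun n hn hn1 => bohr lam a n hn1 (fun k hk1 hk2 => hchain k n hk1 hk2) _ (hT n hn hn1)
  -- the main Cauchy estimate
  have main : ∀ (M N : ℕ), max N₁ 1 ≤ M → M < N → ∀ s : ℂ, L + ε < s.re →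
      ‖partialSum lam a N s - partialSum lam a M s‖
        ≤ K * Real.exp (lam M * (α - s.re)) := by
    intro M N hM hMN s hs
    have hM1 : 1 ≤ M := le_trans (le_max_right _ _) hM
    have hMN₁ : N₁ ≤ M := le_trans (le_max_left _ _) hM
    have hβ : ε/2 < s.re - α := by rw [hαdef]; linarith
    set σ := s.re with hσdef
    set c : ℕ → ℂ := fun k => a k * Complex.exp (-(lam k : ℂ) * ((s.im :ℂ) * I)) with hcdef
    set w : ℕ → ℝ := fun k => Real.exp (-(lam k * σ)) with hwdef
    set u : ℕ → ℝ := fun k => Real.exp (lam k * (α - σ)) with hudef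
    set q : ℕ → ℝ := fun k => Real.exp (lam k * α) with hqdef
    have hwpos : ∀ k, 0 < w k := fun k => Real.exp_pos _
    have hupos : ∀ k, 0 < u k := fun k => Real.exp_pos _
    have hqpos : ∀ k, 0 < q k := fun k => Real.exp_pos _
    have hqw : ∀ k, q k * w k = u k := by
      intro k; rw [hqdef, hwdef, hudef]; simp only; rw [← Real.exp_add]; congr 1; ring
    have humono : ∀ k l : ℕ, 1 ≤ k → k ≤ l → u l ≤ u k := by
      intro k l hk hkl
      rcases eq_or_lt_of_le hkl with rfl|h
      · exact le_refl _
      · have hkl' := hchain k l hk h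
        apply Real.exp_le_exp.mpr
        nlinarith [mul_pos (sub_pos.mpr hkl') (show (0:ℝ) < σ - α from lt_trans (by positivity) hβ)]
    have hTb : ∀ k, N₁ ≤ k → 1 ≤ k →
        ‖∑ j ∈ Finset.Icc 1 k, c j‖ ≤ q k := by
      intro k hk hk1
      have he : (∑ j ∈ Finset.Icc 1 k, c j) = partialSum lam a k ((s.im:ℂ) * I) := by
        rw [partialSum]
      rw [he]
      exact hT k hk hk1 s.im
    have hab : ∀ k, N₁ ≤ k → 1 ≤ k → ‖c k‖ ≤ q k := by
      intro k hk hk1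
      rw [hcdef]; simp only; rw [norm_mul, abs_exp_im, mul_one]
      exact hA k hk hk1
    -- difference as weighted sum
    have hterm : ∀ j : ℕ, a j * Complex.exp (-(lam j:ℂ) * s) = c j * ((w j : ℝ):ℂ) := by
      intro j
      rw [exp_split (lam j) s, hcdef, hwdef]
      simp only
      rw [mul_assoc]
    have hdiff : partialSum lam a N s - partialSum lam a M s
        = ∑ n ∈ Finset.Ioc M N, c n * ((w n : ℝ) : ℂ) := by
      have h1 : ∀ X : ℕ, partialSum lam a X s = ∑ n ∈ Finset.Ioc 0 X, c n * ((w n : ℝ):ℂ) := by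
        intro X
        rw [partialSum, show Finset.Ioc 0 X = Finset.Icc 1 X by rw [← Finset.Icc_add_one_left_eq_Ioc, zero_add]]
        exact Finset.sum_congr rfl fun j _ => hterm j
      rw [h1 N, h1 M,
        ← Finset.sum_Ioc_consecutive (fun n => c n * ((w n:ℝ):ℂ)) (Nat.zero_le M) hMN.le]
      ring
    have habel := abel c (fun n => ((w n : ℝ):ℂ)) M N hMN
    rw [hdiff, habel]
    -- triangle inequality
    have habs1 : ∀ k l : ℕ, ‖(∑ j ∈ Finset.Icc 1 k, c j) * ((w l : ℝ):ℂ)‖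
        = ‖∑ j ∈ Finset.Icc 1 k, c j‖ * w l := by
      intro k l
      rw [norm_mul, Complex.norm_real, Real.norm_eq_abs, abs_of_pos (hwpos l)]
    have habs2 : ∀ n : ℕ, ‖(∑ j ∈ Finset.Icc 1 n, c j) * (((w n : ℝ):ℂ) - ((w (n+1) : ℝ):ℂ))‖
        = ‖∑ j ∈ Finset.Icc 1 n, c j‖ * |w n - w (n+1)| := by
      intro n
      rw [norm_mul]
      congr 1
      rw [show ((w n : ℝ):ℂ) - ((w (n+1) : ℝ):ℂ) = ((w n - w (n+1) : ℝ) : ℂ) by push_cast; ring,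
        Complex.norm_real, Real.norm_eq_abs]
    have tri : ‖(∑ k ∈ Finset.Icc 1 N, c k) * ((w N : ℝ):ℂ)
          - (∑ k ∈ Finset.Icc 1 M, c k) * ((w (M+1) : ℝ):ℂ)
          + ∑ n ∈ Finset.Ioc M (N-1), (∑ k ∈ Finset.Icc 1 n, c k) * (((w n:ℝ):ℂ) - ((w (n+1):ℝ):ℂ))‖
        ≤ ‖∑ j ∈ Finset.Icc 1 N, c j‖ * w N
          + ‖∑ j ∈ Finset.Icc 1 M, c j‖ * w (M+1)
          + ∑ n ∈ Finset.Ioc M (N-1), ‖∑ j ∈ Finset.Icc 1 n, c j‖ * |w n - w (n+1)| := by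
      refine (norm_add_le _ _).trans ?_
      have t1 := norm_sub_le ((∑ k ∈ Finset.Icc 1 N, c k) * ((w N : ℝ):ℂ))
        ((∑ k ∈ Finset.Icc 1 M, c k) * ((w (M+1) : ℝ):ℂ))
      have t2 := norm_sum_le (Finset.Ioc M (N-1))
        (fun n => (∑ k ∈ Finset.Icc 1 n, c k) * (((w n:ℝ):ℂ) - ((w (n+1):ℝ):ℂ)))
      rw [habs1 N N, habs1 M (M+1)] at t1
      have t3 : ∑ n ∈ Finset.Ioc M (N-1),
          ‖(∑ k ∈ Finset.Icc 1 n, c k) * (((w n:ℝ):ℂ) - ((w (n+1):ℝ):ℂ))‖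
          = ∑ n ∈ Finset.Ioc M (N-1), ‖∑ j ∈ Finset.Icc 1 n, c j‖ * |w n - w (n+1)| :=
        Finset.sum_congr rfl fun n _ => habs2 n
      rw [t3] at t2
      linarith
    refine tri.trans ?_
    -- index facts for n in Ioc M (N-1)
    have hidx : ∀ n ∈ Finset.Ioc M (N-1), N₁ ≤ n ∧ 1 ≤ n ∧ 0 < lam (n+1) - lam n := by
      intro n hn
      obtain ⟨hn1, _⟩ := Finset.mem_Ioc.mp hn
      have h1 : 1 ≤ n := le_trans hM1 hn1.le
      exact ⟨le_trans hMN₁ hn1.le, h1, by linarith [hmono n h1]⟩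
    -- per-term bounds, split on sign of σ
    have perterm : ∀ n ∈ Finset.Ioc M (N-1),
        ‖∑ j ∈ Finset.Icc 1 n, c j‖ * |w n - w (n+1)|
          ≤ (C₁ + C₂) * (u n - u (n+1)) := by
      intro n hn
      obtain ⟨hnN₁, hn1, hd⟩ := hidx n hn
      have hq1 : q n * w (n+1) = u n * Real.exp (-((lam (n+1) - lam n)*σ)) := by
        rw [hqdef, hwdef, hudef]; simp only
        rw [← Real.exp_add, ← Real.exp_add]; congr 1; ring
      have hu1 : u (n+1) = u n * Real.exp (-((lam (n+1) - lam n)*(σ - α))) := by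
        rw [hudef]; simp only
        rw [← Real.exp_add]; congr 1; ring
      have hune : 0 ≤ u n - u (n+1) := by
        have := humono n (n+1) hn1 (Nat.le_succ n)
        linarith
      rcases lt_or_ge 0 σ with hσpos | hσneg
      · -- positive case
        have hwd : w (n+1) ≤ w n := Real.exp_le_exp.mpr (by nlinarith)
        have habsw : |w n - w (n+1)| = w n - w (n+1) := abs_of_nonneg (by linarith)
        have hkey := key_pos (α := α) hε hσpos hβ (le_of_lt hd)
        have step : ‖∑ j ∈ Finset.Icc 1 n, c j‖ * |w n - w (n+1)|
            ≤ C₁ * (u n - u (n+1)) := by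
          calc ‖∑ j ∈ Finset.Icc 1 n, c j‖ * |w n - w (n+1)|
              ≤ q n * (w n - w (n+1)) := by
                rw [habsw]
                exact mul_le_mul (hTb n hnN₁ hn1) (le_refl _) (by linarith) (hqpos n).le
            _ = u n * (1 - Real.exp (-((lam (n+1) - lam n)*σ))) := by
                rw [mul_sub, hqw n, hq1]; ring
            _ ≤ u n * (C₁ * (1 - Real.exp (-((lam (n+1) - lam n)*(σ-α))))) :=
                mul_le_mul_of_nonneg_left hkey (hupos n).le
            _ = C₁ * (u n - u (n+1)) := by rw [hu1]; ring
        refine step.trans ?_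
        apply mul_le_mul_of_nonneg_right _ hune
        linarith
      · -- nonpositive case
        have hwd : w n ≤ w (n+1) := Real.exp_le_exp.mpr (by nlinarith)
        have habsw : |w n - w (n+1)| = w (n+1) - w n := by
          rw [abs_sub_comm]; exact abs_of_nonneg (by linarith)
        have hq2 : q n * w (n+1) = u n * Real.exp ((lam (n+1) - lam n)*(-σ)) := by
          rw [hqdef, hwdef, hudef]; simp only
          rw [← Real.exp_add, ← Real.exp_add]; congr 1; ring
        have hTsucc : (∑ j ∈ Finset.Icc 1 (n+1), c j) = (∑ j ∈ Finset.Icc 1 n, c j) + c (n+1) :=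
          Finset.sum_Icc_succ_top (by omega) c
        have hTn : ‖∑ j ∈ Finset.Icc 1 n, c j‖ ≤ 2 * q (n+1) := by
          have e1 : (∑ j ∈ Finset.Icc 1 n, c j) = (∑ j ∈ Finset.Icc 1 (n+1), c j) - c (n+1) := by
            rw [hTsucc]; ring
          rw [e1]
          refine (norm_sub_le _ _).trans ?_
          have := hTb (n+1) (le_trans hnN₁ (Nat.le_succ n)) (by omega)
          have := hab (n+1) (le_trans hnN₁ (Nat.le_succ n)) (by omega)
          linarith
        have b1 : ‖∑ j ∈ Finset.Icc 1 n, c j‖ * (w (n+1) - w n)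
            ≤ u n * (Real.exp ((lam (n+1) - lam n)*(-σ)) - 1) := by
          calc ‖∑ j ∈ Finset.Icc 1 n, c j‖ * (w (n+1) - w n)
              ≤ q n * (w (n+1) - w n) := by
                exact mul_le_mul (hTb n hnN₁ hn1) (le_refl _) (by linarith) (hqpos n).le
            _ = u n * (Real.exp ((lam (n+1) - lam n)*(-σ)) - 1) := by
                rw [mul_sub, hqw n, hq2]; ring
        have b2 : ‖∑ j ∈ Finset.Icc 1 n, c j‖ * (w (n+1) - w n)
            ≤ u n * (2 * Real.exp (-((lam (n+1) - lam n)*(σ - α)))) := by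
          calc ‖∑ j ∈ Finset.Icc 1 n, c j‖ * (w (n+1) - w n)
              ≤ (2 * q (n+1)) * w (n+1) := by
                apply mul_le_mul hTn _ (by linarith) (by positivity)
                linarith [hwpos n]
            _ = 2 * u (n+1) := by rw [mul_assoc, hqw (n+1)]
            _ = u n * (2 * Real.exp (-((lam (n+1) - lam n)*(σ - α)))) := by
                rw [hu1]; ring
        have hmin : ‖∑ j ∈ Finset.Icc 1 n, c j‖ * (w (n+1) - w n)
            ≤ u n * min (2 * Real.exp (-((lam (n+1) - lam n)*(σ - α))))
                (Real.exp ((lam (n+1) - lam n)*(-σ)) - 1) := by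
          rw [mul_min_of_nonneg _ _ (hupos n).le]
          exact le_min b2 b1
        have hkey := key_neg (α := α) hε hσneg hβ hd
        have step : ‖∑ j ∈ Finset.Icc 1 n, c j‖ * |w n - w (n+1)|
            ≤ C₂ * (u n - u (n+1)) := by
          rw [habsw]
          refine hmin.trans ?_
          calc u n * min (2 * Real.exp (-((lam (n+1) - lam n)*(σ - α))))
                (Real.exp ((lam (n+1) - lam n)*(-σ)) - 1)
              ≤ u n * (C₂ * (1 - Real.exp (-((lam (n+1) - lam n)*(σ - α))))) :=
                mul_le_mul_of_nonneg_left hkey (hupos n).le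
            _ = C₂ * (u n - u (n+1)) := by rw [hu1]; ring
        refine step.trans ?_
        apply mul_le_mul_of_nonneg_right _ hune
        linarith
    -- sum of per-term bounds telescopes
    have hsum : ∑ n ∈ Finset.Ioc M (N-1), ‖∑ j ∈ Finset.Icc 1 n, c j‖ * |w n - w (n+1)|
        ≤ (C₁ + C₂) * u M := by
      calc ∑ n ∈ Finset.Ioc M (N-1), ‖∑ j ∈ Finset.Icc 1 n, c j‖ * |w n - w (n+1)|
          ≤ ∑ n ∈ Finset.Ioc M (N-1), (C₁ + C₂) * (u n - u (n+1)) :=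
            Finset.sum_le_sum perterm
        _ = (C₁ + C₂) * ∑ n ∈ Finset.Ioc M (N-1), (u n - u (n+1)) := by
            rw [Finset.mul_sum]
        _ = (C₁ + C₂) * (u (M+1) - u ((N-1)+1)) := by
            rw [telescope u M (N-1) (by omega)]
        _ ≤ (C₁ + C₂) * u M := by
            apply mul_le_mul_of_nonneg_left _ (by linarith)
            have h1 := humono M (M+1) hM1 (Nat.le_succ M)
            have h2 := hupos ((N-1)+1)
            linarith
    -- boundary terms
    have hbN : ‖∑ j ∈ Finset.Icc 1 N, c j‖ * w N ≤ u M := by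
      have h1 : ‖∑ j ∈ Finset.Icc 1 N, c j‖ * w N ≤ q N * w N :=
        mul_le_mul_of_nonneg_right (hTb N (le_trans hMN₁ hMN.le) (by omega)) (hwpos N).le
      rw [hqw N] at h1
      exact h1.trans (humono M N hM1 hMN.le)
    have hbM : ‖∑ j ∈ Finset.Icc 1 M, c j‖ * w (M+1) ≤ 2 * u M := by
      rcases lt_or_ge 0 σ with hσpos | hσneg
      · have hwd : w (M+1) ≤ w M := Real.exp_le_exp.mpr (by nlinarith [hmono M hM1])
        have h1 : ‖∑ j ∈ Finset.Icc 1 M, c j‖ * w (M+1) ≤ q M * w M := by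
          apply mul_le_mul (hTb M hMN₁ hM1) hwd (hwpos (M+1)).le (hqpos M).le
        rw [hqw M] at h1
        linarith [hupos M]
      · have hTsucc : (∑ j ∈ Finset.Icc 1 (M+1), c j) = (∑ j ∈ Finset.Icc 1 M, c j) + c (M+1) :=
          Finset.sum_Icc_succ_top (by omega) c
        have hTn : ‖∑ j ∈ Finset.Icc 1 M, c j‖ ≤ 2 * q (M+1) := by
          have e1 : (∑ j ∈ Finset.Icc 1 M, c j) = (∑ j ∈ Finset.Icc 1 (M+1), c j) - c (M+1) := by
            rw [hTsucc]; ring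
          rw [e1]
          refine (norm_sub_le _ _).trans ?_
          have := hTb (M+1) (le_trans hMN₁ (Nat.le_succ M)) (by omega)
          have := hab (M+1) (le_trans hMN₁ (Nat.le_succ M)) (by omega)
          linarith
        have h1 : ‖∑ j ∈ Finset.Icc 1 M, c j‖ * w (M+1) ≤ (2 * q (M+1)) * w (M+1) :=
          mul_le_mul_of_nonneg_right hTn (hwpos (M+1)).le
        have h2 : (2 * q (M+1)) * w (M+1) = 2 * u (M+1) := by rw [mul_assoc, hqw (M+1)]
        have h3 := humono M (M+1) hM1 (Nat.le_succ M)
        linarith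
    -- conclude
    have hgoal : u M = Real.exp (lam M * (α - σ)) := by rw [hudef]
    rw [← hgoal]
    have : (1 : ℝ) + 2 + (C₁ + C₂) ≤ K := by rw [hKdef]; linarith
    nlinarith [hupos M]
  refine ⟨max N₁ 1, ?_⟩
  intro N hN M hM s hs
  have glue : ∀ M' N' : ℕ, max N₁ 1 ≤ M' → M' < N' →
      ‖partialSum lam a N' s - partialSum lam a M' s‖ ≤ δ := by
    intro M' N' hM' hMN'
    refine (main M' N' hM' hMN' s hs).trans ?_
    obtain ⟨⟨_, hlM⟩, hRM⟩ := hN₁ M' (le_trans (le_max_left _ _) hM')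
    have hstep : K * Real.exp (lam M' * (α - s.re)) ≤ K * Real.exp (-(R * (ε/2))) := by
      apply mul_le_mul_of_nonneg_left _ hK0.le
      apply Real.exp_le_exp.mpr
      have h1 : α - s.re ≤ -(ε/2) := by rw [hαdef] at *; linarith
      nlinarith
    refine hstep.trans ?_
    have hKδ : (0:ℝ) < K/δ := by positivity
    have hRe : R * (ε/2) = Real.log (K/δ) := by rw [hRdef]; field_simp
    rw [hRe, Real.exp_neg, Real.exp_log hKδ, inv_div, mul_comm, div_mul_cancel₀]
    exact ne_of_gt hK0
  rcases lt_trichotomy M N with h|h|h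
  · exact glue M N hM h
  · simp [h, hδ.le]
  · rw [← norm_neg, neg_sub]
    exact glue N M hN h
end

section
/- Let λ be a frequency with L := limsup_{N→∞} (log N)/λ_N < ∞. Suppose for each j ∈ ℕ the coefficients (a_n^j) belong to D∞^ext(λ) with extension f_j (and some bound M_j), and suppose f_j converges uniformly on {s : Re s > 0} to a function f. Then a_n := lim_{j→∞} a_n^j exists for every n, the series ∑_n a_n e^{−λ_n s} converges absolutely at every s with Re s > L, and its sum equals f(s) for all s with Re s > L; in particular (a_n) belongs to D∞^ext(λ) with extension f. (Equivalently: D∞^ext(λ) is a closed subspace of H∞ of the right half-plane, hence complete.) -/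
open Filter Finset Complex MeasureTheory Topology

private lemma lam_lt_of_lt {lam : ℕ → ℝ} (hmono : ∀ n, 1 ≤ n → lam n < lam (n+1)) :
    ∀ m n : ℕ, 1 ≤ m → m < n → lam m < lam n := by
  intro m n hm hmn
  induction n with
  | zero => omega
  | succ k ih =>
    rcases Nat.lt_succ_iff_lt_or_eq.mp hmn with h | h
    · exact (ih h).trans (hmono k (by omega))
    · subst h; exact hmono m hm

private lemma lam_nonneg {lam : ℕ → ℝ} (hmono : ∀ n, 1 ≤ n → lam n < lam (n+1))
    (h1 : 0 ≤ lam 1) : ∀ n, 1 ≤ n → 0 ≤ lam n := by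
  intro n hn
  rcases eq_or_lt_of_le hn with h | h
  · simpa [← h] using h1
  · exact h1.trans (lam_lt_of_lt hmono 1 n le_rfl h).le

private lemma limsup_nonneg {lam : ℕ → ℝ}
    (hbd : IsBoundedUnder (· ≤ ·) atTop (fun N : ℕ => Real.log N / lam N))
    (htends : Tendsto lam atTop atTop) :
    0 ≤ limsup (fun N : ℕ => Real.log N / lam N) atTop := by
  refine le_limsup_of_frequently_le ?_ hbd
  refine Eventually.frequently ?_
  filter_upwards [htends.eventually_ge_atTop 1, eventually_ge_atTop 1] with N h1 hN
  have : (0:ℝ) ≤ Real.log N := Real.log_nonneg (by exact_mod_cast hN)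
  positivity

private lemma summable_exp_neg {lam : ℕ → ℝ} (hmono : ∀ n, 1 ≤ n → lam n < lam (n+1))
    (h1 : 0 ≤ lam 1)
    (hbd : IsBoundedUnder (· ≤ ·) atTop (fun N : ℕ => Real.log N / lam N))
    (htends : Tendsto lam atTop atTop)
    {σ : ℝ} (hσ : limsup (fun N : ℕ => Real.log N / lam N) atTop < σ) :
    Summable (fun N : ℕ => Real.exp (-(lam N) * σ)) := by
  set Lr := limsup (fun N : ℕ => Real.log N / lam N) atTop with hLr
  have hLr0 : 0 ≤ Lr := limsup_nonneg hbd htends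
  set c : ℝ := (Lr + σ)/2 with hc
  have hσ0 : 0 < σ := lt_of_le_of_lt hLr0 hσ
  have hc0 : 0 < c := by rw [hc]; linarith
  have hcσ : c < σ := by simp only [hc]; linarith
  have hp : -(σ/c) < -1 := by
    rw [neg_lt_neg_iff]
    rw [lt_div_iff₀ hc0]; linarith
  have hsum : Summable (fun N : ℕ => (N:ℝ) ^ (-(σ/c))) := Real.summable_nat_rpow.2 hp
  have hev : ∀ᶠ N : ℕ in atTop, Real.exp (-(lam N) * σ) ≤ (N:ℝ) ^ (-(σ/c)) := by
    filter_upwards [htends.eventually_ge_atTop 1, eventually_ge_atTop 1,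
      eventually_lt_of_limsup_lt (show Lr < c by rw [hc]; linarith) hbd] with N hl1 hN1 hlt
    have hNpos : (0:ℝ) < N := by exact_mod_cast hN1
    have hlam : 0 < lam N := lt_of_lt_of_le one_pos hl1
    have hlog : Real.log N < c * lam N := by
      rw [div_lt_iff₀ hlam] at hlt; linarith
    have : -(lam N) * σ ≤ Real.log N * (-(σ/c)) := by
      rw [mul_neg, neg_mul, neg_le_neg_iff, mul_div_assoc']
      rw [div_le_iff₀ hc0]
      calc Real.log N * σ ≤ (c * lam N) * σ := by
            apply mul_le_mul_of_nonneg_right hlog.le (by linarith)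
        _ = lam N * σ * c := by ring
    calc Real.exp (-(lam N) * σ) ≤ Real.exp (Real.log N * (-(σ/c))) := Real.exp_le_exp.2 this
      _ = (N:ℝ) ^ (-(σ/c)) := (Real.rpow_def_of_pos hNpos _).symm
  obtain ⟨N₀, hN₀⟩ := eventually_atTop.1 hev
  refine (summable_nat_add_iff N₀).1 ?_
  refine Summable.of_nonneg_of_le (fun n => (Real.exp_pos _).le)
    (fun n => hN₀ (n + N₀) (by omega)) ?_
  exact (summable_nat_add_iff N₀).2 hsum

/-- **Bohr's coefficient bound**: if a bounded holomorphic function on the right half-plane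
is represented by an absolutely convergent general Dirichlet series on some smaller half-plane,
then each coefficient is bounded by the sup-norm bound. -/
private lemma coeff_bound {lam : ℕ → ℝ} (hmono : ∀ n, 1 ≤ n → lam n < lam (n+1))
    (h1 : 0 ≤ lam 1) (c : ℕ → ℂ) (g : ℂ → ℂ) (ε A : ℝ) (hA : 0 ≤ A)
    (hg : DifferentiableOn ℂ g {s : ℂ | 0 < s.re})
    (hgb : ∀ s : ℂ, 0 < s.re → ‖g s‖ ≤ ε)
    (hsum : Summable (fun m : ℕ => ‖c (m+1)‖ * Real.exp (-(lam (m+1)) * (A+1))))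
    (heq : ∀ s : ℂ, A < s.re → g s = ∑' m : ℕ, c (m+1) * Complex.exp (-(lam (m+1) : ℂ) * s))
    {n : ℕ} (hn : 1 ≤ n) : ‖c n‖ ≤ ε := by
  classical
  have hε0 : 0 ≤ ε := le_trans (norm_nonneg _) (hgb 1 (by simp))
  set σ₂ : ℝ := A + 1 with hσ₂def
  have hσ₂pos : 0 < σ₂ := by simp only [hσ₂def]; linarith
  have hAσ₂ : A < σ₂ := by simp only [hσ₂def]; linarith
  have hlamn : 0 ≤ lam n := lam_nonneg hmono h1 n hn
  set θ : ℕ → ℝ := fun m => lam n - lam (m+1) with hθdef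
  have hθm₀ : θ (n-1) = 0 := by
    have hnn : n - 1 + 1 = n := by omega
    simp only [hθdef, hnn, sub_self]
  have hθne : ∀ m : ℕ, m ≠ n - 1 → θ m ≠ 0 := by
    intro m hm
    have hne : m + 1 ≠ n := by omega
    simp only [hθdef, sub_ne_zero]
    rcases lt_or_gt_of_ne hne with h | h
    · exact (lam_lt_of_lt hmono (m+1) n (by omega) h).ne'
    · exact (lam_lt_of_lt hmono n (m+1) hn h).ne
  set h : ℂ → ℂ := fun s => g s * Complex.exp ((lam n : ℂ) * s) with hhdef
  have hhdiff : DifferentiableOn ℂ h {s : ℂ | 0 < s.re} :=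
    hg.mul (Complex.differentiable_exp.comp
      ((differentiable_const _).mul differentiable_id)).differentiableOn
  have hhnorm : ∀ s : ℂ, 0 < s.re → ‖h s‖ ≤ ε * Real.exp (lam n * s.re) := by
    intro s hs
    simp only [hhdef, norm_mul, Complex.norm_exp]
    have hre : ((lam n : ℂ) * s).re = lam n * s.re := by
      simp [Complex.mul_re]
    rw [hre]
    exact mul_le_mul_of_nonneg_right (hgb s hs) (Real.exp_pos _).le
  set Iv : ℝ → ℝ → ℂ := fun σ T => ∫ t : ℝ in -T..T, h ((σ : ℂ) + (t : ℂ) * Complex.I)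
    with hIvdef
  -- summability of the basic bound
  have hS : Summable (fun m : ℕ => ‖c (m+1)‖ * Real.exp (θ m * σ₂)) := by
    refine (hsum.mul_left (Real.exp (lam n * σ₂))).congr fun m => ?_
    have hexp : θ m * σ₂ = lam n * σ₂ + (-(lam (m+1)) * (A+1)) := by
      simp only [hθdef, hσ₂def]; ring
    rw [hexp, Real.exp_add]; ring
  -- Step A: expansion of the vertical integral at σ₂ as a series
  have key : ∀ T : ℝ, 0 < T →
      Iv σ₂ T = ∑' m : ℕ, (c (m+1) * Complex.exp ((θ m * σ₂ : ℝ) : ℂ) *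
        ∫ t : ℝ in -T..T, Complex.exp ((θ m : ℂ) * (t : ℂ) * Complex.I)) := by
    intro T hT
    have hle : -T ≤ T := by linarith
    set F : ℕ → ℝ → ℂ := fun m t => c (m+1) * Complex.exp ((θ m * σ₂ : ℝ) : ℂ) *
      Complex.exp ((θ m : ℂ) * (t : ℂ) * Complex.I) with hFdef
    have hFcont : ∀ m, Continuous (F m) := by
      intro m
      apply continuous_const.mul
      exact Complex.continuous_exp.comp (by fun_prop)
    have hpt : ∀ t : ℝ, h ((σ₂ : ℂ) + (t : ℂ) * Complex.I) = ∑' m : ℕ, F m t := by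
      intro t
      have hre : (((σ₂ : ℂ)) + (t : ℂ) * Complex.I).re = σ₂ := by simp
      simp only [hhdef]
      rw [heq _ (by rw [hre]; exact hAσ₂), ← tsum_mul_right]
      congr 1; funext m
      simp only [hFdef]
      rw [mul_assoc, mul_assoc, ← Complex.exp_add, ← Complex.exp_add]
      congr 1
      simp only [hθdef]
      push_cast
      ring
    have hFnorm : ∀ m (t : ℝ), ‖F m t‖ = ‖c (m+1)‖ * Real.exp (θ m * σ₂) := by
      intro m t
      simp only [hFdef, norm_mul, Complex.norm_exp]
      have h1' : (((θ m * σ₂ : ℝ) : ℂ)).re = θ m * σ₂ := by simp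
      have h2' : (((θ m : ℂ)) * (t : ℂ) * Complex.I).re = 0 := by simp
      rw [h1', h2', Real.exp_zero, mul_one]
    have hFint : ∀ m, Integrable (F m) (volume.restrict (Set.Ioc (-T) T)) :=
      fun m => (hFcont m).integrableOn_Ioc
    have hFnormint : ∀ m, (∫ t in Set.Ioc (-T) T, ‖F m t‖)
        = (2*T) * (‖c (m+1)‖ * Real.exp (θ m * σ₂)) := by
      intro m
      simp only [hFnorm]
      rw [MeasureTheory.setIntegral_const]
      rw [measureReal_def, Real.volume_Ioc]
      rw [ENNReal.toReal_ofReal (by linarith)]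
      rw [smul_eq_mul]
      ring
    have hsum2 : Summable (fun m => ∫ t in Set.Ioc (-T) T, ‖F m t‖) := by
      refine ((hS.mul_left (2*T)).congr fun m => ?_)
      rw [hFnormint m]
    have hswap := MeasureTheory.integral_tsum_of_summable_integral_norm hFint hsum2
    simp only [hIvdef]
    rw [intervalIntegral.integral_of_le hle]
    rw [MeasureTheory.integral_congr_ae (Filter.Eventually.of_forall fun t => hpt t)]
    rw [← hswap]
    congr 1; funext m
    rw [intervalIntegral.integral_of_le hle]
    exact (MeasureTheory.integral_const_mul (c (m+1) * Complex.exp ((θ m * σ₂ : ℝ) : ℂ))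
      (μ := volume.restrict (Set.Ioc (-T) T)) (fun t : ℝ => Complex.exp ((θ m : ℂ) * (t : ℂ) * Complex.I)))
  -- Step A2: the averaged vertical integral tends to `c n`
  have h2T : Tendsto (fun T : ℝ => 2*T) atTop atTop :=
    Tendsto.const_mul_atTop two_pos tendsto_id
  set K : ℕ → ℝ → ℂ := fun m T => ∫ t : ℝ in -T..T,
      Complex.exp ((θ m : ℂ) * (t : ℂ) * Complex.I) with hKdef
  set φ : ℝ → ℕ → ℂ := fun T m => ((2*T : ℝ) : ℂ)⁻¹ *
      (c (m+1) * Complex.exp ((θ m * σ₂ : ℝ) : ℂ) * K m T) with hφdef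
  have hKbound : ∀ (m : ℕ) (T : ℝ), 0 < T → ‖K m T‖ ≤ 2*T := by
    intro m T hT
    have hb := intervalIntegral.norm_integral_le_of_norm_le_const (C := 1) (a := -T) (b := T)
      (f := fun t : ℝ => Complex.exp ((θ m : ℂ) * (t : ℂ) * Complex.I))
      (fun t _ => by simp [Complex.norm_exp])
    calc ‖K m T‖ ≤ 1 * |T - (-T)| := hb
      _ = 2*T := by rw [abs_of_pos (by linarith)]; ring
  have hφnorm : ∀ (T : ℝ), 0 < T → ∀ m, ‖φ T m‖ =
      (2*T)⁻¹ * (‖c (m+1)‖ * Real.exp (θ m * σ₂) * ‖K m T‖) := by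
    intro T hT m
    simp only [hφdef, norm_mul, norm_inv, Complex.norm_real, Real.norm_eq_abs,
      Complex.norm_exp]
    rw [← abs_mul, abs_of_pos (by linarith : (0:ℝ) < 2*T)]
    have : ((θ m * σ₂ : ℝ) : ℂ).re = θ m * σ₂ := by simp
    rw [this]
  have hφbound : ∀ T : ℝ, 1 ≤ T → ∀ m,
      ‖φ T m‖ ≤ ‖c (m+1)‖ * Real.exp (θ m * σ₂) := by
    intro T hT m
    have hTpos : (0:ℝ) < T := by linarith
    rw [hφnorm T hTpos m]
    calc (2*T)⁻¹ * (‖c (m+1)‖ * Real.exp (θ m * σ₂) * ‖K m T‖)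
        ≤ (2*T)⁻¹ * (‖c (m+1)‖ * Real.exp (θ m * σ₂) * (2*T)) := by
          have h0 : (0:ℝ) ≤ (2*T)⁻¹ := by positivity
          have h1' : (0:ℝ) ≤ ‖c (m+1)‖ * Real.exp (θ m * σ₂) := by positivity
          exact mul_le_mul_of_nonneg_left
            (mul_le_mul_of_nonneg_left (hKbound m T hTpos) h1') h0
      _ = ‖c (m+1)‖ * Real.exp (θ m * σ₂) := by
          field_simp
  have hφlim : ∀ m : ℕ, Tendsto (fun T => φ T m) atTop
      (𝓝 (if m = n-1 then c n else 0)) := by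
    intro m
    by_cases hm : m = n - 1
    · subst hm
      simp only [if_pos rfl]
      have hnn : n - 1 + 1 = n := by omega
      refine Tendsto.congr' ?_ tendsto_const_nhds
      filter_upwards [eventually_gt_atTop 0] with T hT
      have hKval : K (n-1) T = ((2*T : ℝ) : ℂ) := by
        simp only [hKdef, hθm₀, Complex.ofReal_zero, zero_mul, Complex.exp_zero]
        rw [intervalIntegral.integral_const]
        push_cast
        simp
        ring
      have h2Tne : ((2*T : ℝ) : ℂ) ≠ 0 := by
        exact_mod_cast (by positivity : (2*T:ℝ) ≠ 0)
      simp only [hφdef, hKval, hθm₀, hnn, zero_mul, Complex.ofReal_zero, Complex.exp_zero,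
        mul_one]
      rw [if_pos trivial]
      exact (mul_comm _ _).trans (mul_inv_cancel_right₀ h2Tne (c n)) |>.symm
    · simp only [if_neg hm]
      have hθ : θ m ≠ 0 := hθne m hm
      have hθC : ((θ m : ℂ)) * Complex.I ≠ 0 :=
        mul_ne_zero (by exact_mod_cast hθ) Complex.I_ne_zero
      have hKval : ∀ T : ℝ, K m T = (Complex.exp ((θ m : ℂ) * Complex.I * T) -
          Complex.exp ((θ m : ℂ) * Complex.I * (-T : ℝ))) / ((θ m : ℂ) * Complex.I) := by
        intro T
        simp only [hKdef]
        rw [show (fun t : ℝ => Complex.exp ((θ m : ℂ) * (t : ℂ) * Complex.I))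
            = fun t : ℝ => Complex.exp (((θ m : ℂ) * Complex.I) * (t : ℂ)) from
          funext fun t => by rw [mul_right_comm]]
        exact integral_exp_mul_complex hθC
      have hK2 : ∀ T : ℝ, ‖K m T‖ ≤ 2 / |θ m| := by
        intro T
        rw [hKval T, norm_div]
        have hden : ‖((θ m : ℂ)) * Complex.I‖ = |θ m| := by
          simp
        rw [hden]
        have hnum : ‖Complex.exp ((θ m : ℂ) * Complex.I * T) -
            Complex.exp ((θ m : ℂ) * Complex.I * (-T : ℝ))‖ ≤ 2 := by
          refine (norm_sub_le _ _).trans ?_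
          have e1 : ‖Complex.exp ((θ m : ℂ) * Complex.I * T)‖ = 1 := by
            simp [Complex.norm_exp]
          have e2 : ‖Complex.exp ((θ m : ℂ) * Complex.I * (-T : ℝ))‖ = 1 := by
            simp [Complex.norm_exp]
          rw [e1, e2]; norm_num
        exact div_le_div_of_nonneg_right hnum (abs_pos.2 hθ).le
      have hbd2 : ∀ᶠ T : ℝ in atTop, ‖φ T m‖ ≤
          (2*T)⁻¹ * (‖c (m+1)‖ * Real.exp (θ m * σ₂) * (2/|θ m|)) := by
        filter_upwards [eventually_gt_atTop 0] with T hT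
        rw [hφnorm T hT m]
        have h1' : (0:ℝ) ≤ ‖c (m+1)‖ * Real.exp (θ m * σ₂) := by positivity
        exact mul_le_mul_of_nonneg_left
          (mul_le_mul_of_nonneg_left (hK2 T) h1') (by positivity)
      have hlim0 : Tendsto (fun T : ℝ => (2*T)⁻¹ *
          (‖c (m+1)‖ * Real.exp (θ m * σ₂) * (2/|θ m|))) atTop (𝓝 0) := by
        have := (tendsto_inv_atTop_zero.comp h2T).mul_const
          (‖c (m+1)‖ * Real.exp (θ m * σ₂) * (2/|θ m|))
        simpa using this
      exact squeeze_zero_norm' hbd2 hlim0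
  have htsum := tendsto_tsum_of_dominated_convergence hS hφlim
    (by filter_upwards [eventually_ge_atTop 1] with T hT; exact hφbound T hT)
  rw [tsum_ite_eq] at htsum
  have htend : Tendsto (fun T : ℝ => ((2*T : ℝ) : ℂ)⁻¹ * Iv σ₂ T) atTop (𝓝 (c n)) := by
    refine Tendsto.congr' ?_ htsum
    filter_upwards [eventually_gt_atTop 0] with T hT
    simp only [hφdef]
    rw [tsum_mul_left, ← key T hT]
  -- Step B: contour shift
  have hIσbound : ∀ (σ₁ T : ℝ), 0 < σ₁ → 0 < T →
      ‖Iv σ₁ T‖ ≤ ε * Real.exp (lam n * σ₁) * (2*T) := by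
    intro σ₁ T h₁ hT
    have hb := intervalIntegral.norm_integral_le_of_norm_le_const
      (C := ε * Real.exp (lam n * σ₁)) (a := -T) (b := T)
      (f := fun t : ℝ => h ((σ₁ : ℂ) + (t : ℂ) * Complex.I)) ?_
    · calc ‖Iv σ₁ T‖ ≤ ε * Real.exp (lam n * σ₁) * |T - (-T)| := hb
        _ = ε * Real.exp (lam n * σ₁) * (2*T) := by rw [abs_of_pos (by linarith)]; ring
    · intro t _
      have hre : (((σ₁ : ℂ)) + (t : ℂ) * Complex.I).re = σ₁ := by simp
      have := hhnorm ((σ₁ : ℂ) + (t : ℂ) * Complex.I) (by rw [hre]; exact h₁)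
      rw [hre] at this
      exact this
  have hshift : ∀ σ₁ : ℝ, 0 < σ₁ → σ₁ < σ₂ → ∀ T : ℝ, 0 < T →
      ‖Iv σ₂ T - Iv σ₁ T‖ ≤ 2 * (ε * Real.exp (lam n * σ₂) * (σ₂ - σ₁)) := by
    intro σ₁ h₁ h₁₂ T hT
    set z : ℂ := ⟨σ₁, -T⟩ with hz
    set w : ℂ := ⟨σ₂, T⟩ with hw
    have hzre : z.re = σ₁ := rfl
    have hzim : z.im = -T := rfl
    have hwre : w.re = σ₂ := rfl
    have hwim : w.im = T := rfl
    have hsub : Set.uIcc z.re w.re ×ℂ Set.uIcc z.im w.im ⊆ {s : ℂ | 0 < s.re} := by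
      intro s hs
      rw [Complex.mem_reProdIm] at hs
      have h1s : s.re ∈ Set.uIcc σ₁ σ₂ := by rw [← hzre, ← hwre]; exact hs.1
      rw [Set.uIcc_of_le h₁₂.le] at h1s
      exact lt_of_lt_of_le h₁ h1s.1
    have hrect := Complex.integral_boundary_rect_eq_zero_of_differentiableOn h z w
      (hhdiff.mono hsub)
    rw [hzre, hzim, hwre, hwim] at hrect
    -- horizontal integral bounds
    have hhoriz : ∀ y : ℝ, ‖∫ x : ℝ in σ₁..σ₂, h ((x : ℂ) + (y : ℂ) * Complex.I)‖ ≤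
        ε * Real.exp (lam n * σ₂) * (σ₂ - σ₁) := by
      intro y
      have hb := intervalIntegral.norm_integral_le_of_norm_le_const
        (C := ε * Real.exp (lam n * σ₂)) (a := σ₁) (b := σ₂)
        (f := fun x : ℝ => h ((x : ℂ) + (y : ℂ) * Complex.I)) ?_
      · calc ‖∫ x : ℝ in σ₁..σ₂, h ((x : ℂ) + (y : ℂ) * Complex.I)‖
            ≤ ε * Real.exp (lam n * σ₂) * |σ₂ - σ₁| := hb
          _ = ε * Real.exp (lam n * σ₂) * (σ₂ - σ₁) := by
              rw [abs_of_pos (by linarith)]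
      · intro x hx
        rw [Set.uIoc_of_le h₁₂.le] at hx
        have hre : (((x : ℂ)) + (y : ℂ) * Complex.I).re = x := by simp
        have hb2 := hhnorm ((x : ℂ) + (y : ℂ) * Complex.I) (by rw [hre]; exact h₁.trans hx.1)
        rw [hre] at hb2
        refine hb2.trans ?_
        have : Real.exp (lam n * x) ≤ Real.exp (lam n * σ₂) :=
          Real.exp_le_exp.2 (mul_le_mul_of_nonneg_left hx.2 hlamn)
        exact mul_le_mul_of_nonneg_left this hε0
    -- extract the identity
    have hid : Complex.I • (Iv σ₂ T - Iv σ₁ T) =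
        (∫ x : ℝ in σ₁..σ₂, h ((x : ℂ) + ((T:ℝ) : ℂ) * Complex.I)) -
        (∫ x : ℝ in σ₁..σ₂, h ((x : ℂ) + ((-T:ℝ) : ℂ) * Complex.I)) := by
      have e1 : Iv σ₂ T = ∫ y : ℝ in -T..T, h ((σ₂ : ℂ) + (y : ℂ) * Complex.I) := rfl
      have e2 : Iv σ₁ T = ∫ y : ℝ in -T..T, h ((σ₁ : ℂ) + (y : ℂ) * Complex.I) := rfl
      rw [e1, e2, smul_sub]
      linear_combination hrect
    have hnormid : ‖Iv σ₂ T - Iv σ₁ T‖ = ‖Complex.I • (Iv σ₂ T - Iv σ₁ T)‖ := by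
      rw [norm_smul, Complex.norm_I, one_mul]
    rw [hnormid, hid]
    calc ‖_ - _‖ ≤ ‖∫ x : ℝ in σ₁..σ₂, h ((x : ℂ) + ((T:ℝ) : ℂ) * Complex.I)‖ +
          ‖∫ x : ℝ in σ₁..σ₂, h ((x : ℂ) + ((-T:ℝ) : ℂ) * Complex.I)‖ := norm_sub_le _ _
      _ ≤ ε * Real.exp (lam n * σ₂) * (σ₂ - σ₁) + ε * Real.exp (lam n * σ₂) * (σ₂ - σ₁) :=
          add_le_add (hhoriz T) (hhoriz (-T))
      _ = 2 * (ε * Real.exp (lam n * σ₂) * (σ₂ - σ₁)) := by ring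
  -- Step C: conclude
  have hmain : ∀ σ₁ : ℝ, 0 < σ₁ → σ₁ < σ₂ → ‖c n‖ ≤ ε * Real.exp (lam n * σ₁) := by
    intro σ₁ h₁ h₁₂
    have hu : Tendsto (fun T : ℝ => ‖((2*T : ℝ) : ℂ)⁻¹ * Iv σ₂ T‖) atTop
        (𝓝 (‖c n‖)) := by
      have := htend.norm
      simpa using this
    set B : ℝ := 2 * (ε * Real.exp (lam n * σ₂) * (σ₂ - σ₁)) with hB
    have hv : Tendsto (fun T : ℝ => ε * Real.exp (lam n * σ₁) + (2*T)⁻¹ * B) atTop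
        (𝓝 (ε * Real.exp (lam n * σ₁))) := by
      have h0 : Tendsto (fun T : ℝ => (2*T)⁻¹ * B) atTop (𝓝 0) := by
        have := (tendsto_inv_atTop_zero.comp h2T).mul_const B
        simpa using this
      simpa using tendsto_const_nhds.add h0
    refine le_of_tendsto_of_tendsto hu hv ?_
    filter_upwards [eventually_ge_atTop 1] with T hT
    have hTpos : (0:ℝ) < T := by linarith
    have h2Tpos : (0:ℝ) < 2*T := by linarith
    have hn1 : ‖((2*T : ℝ) : ℂ)⁻¹ * Iv σ₂ T‖ = (2*T)⁻¹ * ‖Iv σ₂ T‖ := by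
      rw [norm_mul, norm_inv]
      congr 1
      rw [Complex.norm_real, Real.norm_eq_abs, abs_of_pos h2Tpos]
    rw [hn1]
    have hIb : ‖Iv σ₂ T‖ ≤ ε * Real.exp (lam n * σ₁) * (2*T) + B := by
      calc ‖Iv σ₂ T‖ = ‖Iv σ₁ T + (Iv σ₂ T - Iv σ₁ T)‖ := by ring_nf
        _ ≤ ‖Iv σ₁ T‖ + ‖Iv σ₂ T - Iv σ₁ T‖ := norm_add_le _ _
        _ ≤ ε * Real.exp (lam n * σ₁) * (2*T) + B :=
            add_le_add (hIσbound σ₁ T h₁ hTpos) (hshift σ₁ h₁ h₁₂ T hTpos)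
    calc (2*T)⁻¹ * ‖Iv σ₂ T‖ ≤ (2*T)⁻¹ * (ε * Real.exp (lam n * σ₁) * (2*T) + B) := by
          exact mul_le_mul_of_nonneg_left hIb (by positivity)
      _ = ε * Real.exp (lam n * σ₁) + (2*T)⁻¹ * B := by
          field_simp
  have hlimσ : Tendsto (fun σ₁ : ℝ => ε * Real.exp (lam n * σ₁)) (𝓝[>] (0:ℝ))
      (𝓝 (ε * Real.exp (lam n * 0))) := by
    refine Tendsto.mono_left ?_ nhdsWithin_le_nhds
    exact (continuous_const.mul (Real.continuous_exp.comp
      (continuous_const.mul continuous_id))).tendsto 0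
  have hfin : ‖c n‖ ≤ ε * Real.exp (lam n * 0) := by
    refine ge_of_tendsto hlimσ ?_
    filter_upwards [Ioo_mem_nhdsGT_of_mem (Set.mem_Ico.mpr ⟨le_rfl, hσ₂pos⟩)] with σ₁ hσ₁
    exact hmain σ₁ hσ₁.1 hσ₁.2
  simpa using hfin
private lemma partialSum_eq_range (lam : ℕ → ℝ) (a : ℕ → ℂ) (N : ℕ) (s : ℂ) :
    partialSum lam a N s = ∑ m ∈ Finset.range N, a (m+1) * Complex.exp (-(lam (m+1) : ℂ) * s) := by
  rw [partialSum, ← Finset.Ico_add_one_right_eq_Icc, Finset.sum_Ico_eq_sum_range]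
  exact Finset.sum_congr rfl fun m _ => by rw [Nat.add_comm 1 m]

private lemma term_abs (b : ℂ) (μ : ℝ) (s : ℂ) :
    ‖b * Complex.exp (-(μ:ℂ) * s)‖ = ‖b‖ * Real.exp (-μ * s.re) := by
  simp [Complex.norm_exp]

/-- From membership in `D∞^ext(λ)`, extract a half-plane of absolute convergence on which
the extension is given by the (everywhere absolutely convergent) series. -/
private lemma memDExt_absConv {lam : ℕ → ℝ} (hmono : ∀ n, 1 ≤ n → lam n < lam (n+1))
    (h1 : 0 ≤ lam 1)
    (hbd : IsBoundedUnder (· ≤ ·) atTop (fun N : ℕ => Real.log N / lam N))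
    (htends : Tendsto lam atTop atTop)
    {a : ℕ → ℂ} {f : ℂ → ℂ} {M : ℝ} (hmem : MemDExt lam a f M) :
    ∃ A : ℝ, 0 ≤ A ∧
      (∀ σ : ℝ, A < σ →
        Summable (fun m : ℕ => ‖a (m+1)‖ * Real.exp (-(lam (m+1)) * σ))) ∧
      (∀ s : ℂ, A < s.re →
        f s = ∑' m : ℕ, a (m+1) * Complex.exp (-(lam (m+1) : ℂ) * s)) := by
  obtain ⟨⟨σ₀, hconv, hconv'⟩, hdiff, hfb⟩ := hmem
  set Lr := limsup (fun N : ℕ => Real.log N / lam N) atTop with hLr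
  have hLr0 : 0 ≤ Lr := limsup_nonneg hbd htends
  set u : ℝ := max σ₀ 0 + 1 with hu
  have hu0 : 0 < u := by have := le_max_right σ₀ 0; simp only [hu]; linarith
  have huσ₀ : σ₀ < u := by have := le_max_left σ₀ 0; simp only [hu]; linarith
  obtain ⟨L, hL⟩ := hconv (u : ℂ) (by simpa using huσ₀)
  -- terms tend to zero, hence coefficients are `O(exp (lam m * u))`
  have hterm : Tendsto (fun N : ℕ => a (N+1) * Complex.exp (-(lam (N+1) : ℂ) * (u:ℂ)))
      atTop (𝓝 0) := by
    have h2 : Tendsto (fun N : ℕ => partialSum lam a (N+1) (u:ℂ) - partialSum lam a N (u:ℂ))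
        atTop (𝓝 (L - L)) := ((hL.comp (tendsto_add_atTop_nat 1)).sub hL)
    rw [sub_self] at h2
    refine h2.congr fun N => ?_
    rw [partialSum, partialSum, Finset.sum_Icc_succ_top (by omega)]
    ring
  obtain ⟨C, hC⟩ : ∃ C : ℝ, ∀ N : ℕ,
      ‖a (N+1)‖ * Real.exp (-(lam (N+1)) * u) ≤ C := by
    have hb := hterm.norm.bddAbove_range
    obtain ⟨C, hC⟩ := hb
    refine ⟨C, fun N => ?_⟩
    have := hC (Set.mem_range_self (f := fun N : ℕ =>
      ‖a (N+1) * Complex.exp (-(lam (N+1) : ℂ) * (u:ℂ))‖) N)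
    rw [term_abs] at this
    simpa using this
  have hCnn : 0 ≤ C := le_trans (by positivity) (hC 0)
  have hsummain : ∀ σ : ℝ, u + Lr < σ →
      Summable (fun m : ℕ => ‖a (m+1)‖ * Real.exp (-(lam (m+1)) * σ)) := by
    intro σ hσ
    have hσu : Lr < σ - u := by linarith
    have hs := summable_exp_neg hmono h1 hbd htends hσu
    have hs1 : Summable (fun m : ℕ => C * Real.exp (-(lam (m+1)) * (σ - u))) :=
      ((summable_nat_add_iff 1).2 hs).mul_left C
    refine Summable.of_nonneg_of_le (fun m => by positivity) (fun m => ?_) hs1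
    have : ‖a (m+1)‖ * Real.exp (-(lam (m+1)) * σ)
        = (‖a (m+1)‖ * Real.exp (-(lam (m+1)) * u)) *
          Real.exp (-(lam (m+1)) * (σ - u)) := by
      rw [mul_assoc, ← Real.exp_add]; ring_nf
    rw [this]
    exact mul_le_mul_of_nonneg_right (hC m) (Real.exp_pos _).le
  refine ⟨u + Lr, by linarith, hsummain, ?_⟩
  -- equality with the extension
  intro s hs
  have hsu : u + Lr < s.re := hs
  have hsmax : max σ₀ 0 < s.re := by
    have : max σ₀ 0 < u := by simp only [hu]; linarith
    linarith
  have hsum : Summable (fun m : ℕ => a (m+1) * Complex.exp (-(lam (m+1) : ℂ) * s)) := by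
    refine Summable.of_norm ?_
    have : (fun m : ℕ => ‖a (m+1) * Complex.exp (-(lam (m+1) : ℂ) * s)‖)
        = fun m => ‖a (m+1)‖ * Real.exp (-(lam (m+1)) * s.re) := by
      funext m; rw [term_abs]
    rw [this]
    exact hsummain s.re hsu
  have ht1 : Tendsto (fun N => partialSum lam a N s) atTop
      (𝓝 (∑' m : ℕ, a (m+1) * Complex.exp (-(lam (m+1) : ℂ) * s))) := by
    have := hsum.hasSum.tendsto_sum_nat
    refine this.congr fun N => ?_
    rw [partialSum_eq_range]
  exact tendsto_nhds_unique (hconv' s hsmax) ht1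

private lemma diffOn_tsum {lam : ℕ → ℝ} (hmono : ∀ n, 1 ≤ n → lam n < lam (n+1))
    (h1 : 0 ≤ lam 1) {c : ℕ → ℂ} {α : ℝ}
    (hs : ∀ σ : ℝ, α < σ →
      Summable (fun m : ℕ => ‖c (m+1)‖ * Real.exp (-(lam (m+1)) * σ))) :
    DifferentiableOn ℂ (fun s => ∑' m : ℕ, c (m+1) * Complex.exp (-(lam (m+1) : ℂ) * s))
      {s : ℂ | α < s.re} := by
  intro s₀ hs₀
  apply DifferentiableAt.differentiableWithinAt
  have hs₀' : α < s₀.re := hs₀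
  set σ' : ℝ := (α + s₀.re)/2 with hσ'
  have h₁ : α < σ' := by simp only [hσ']; linarith
  have h₂ : σ' < s₀.re := by simp only [hσ']; linarith
  set U : Set ℂ := {s : ℂ | σ' < s.re} with hU
  have hUopen : IsOpen U := isOpen_lt continuous_const Complex.continuous_re
  have htu : TendstoUniformlyOn
      (fun N s => ∑ m ∈ Finset.range N, c (m+1) * Complex.exp (-(lam (m+1) : ℂ) * s))
      (fun s => ∑' m : ℕ, c (m+1) * Complex.exp (-(lam (m+1) : ℂ) * s)) atTop U := by
    refine tendstoUniformlyOn_tsum_nat (hs σ' h₁) ?_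
    intro m x hx
    rw [term_abs]
    refine mul_le_mul_of_nonneg_left ?_ (norm_nonneg _)
    refine Real.exp_le_exp.2 ?_
    have hx' : σ' < x.re := hx
    have hl : 0 ≤ lam (m+1) := lam_nonneg hmono h1 (m+1) (by omega)
    nlinarith
  have hdiff := htu.tendstoLocallyUniformlyOn.differentiableOn
    (Filter.Eventually.of_forall fun N => ?_) hUopen
  · exact (hdiff.differentiableAt (hUopen.mem_nhds h₂))
  · apply DifferentiableOn.fun_sum
    intro m _
    apply DifferentiableOn.mul (differentiableOn_const _)
    exact (Complex.differentiable_exp.comp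
      ((differentiable_const _).mul differentiable_id)).differentiableOn

private lemma eqOn_halfplane {f g : ℂ → ℂ} {α β : ℝ} (hαβ : α ≤ β)
    (hf : DifferentiableOn ℂ f {s : ℂ | α < s.re})
    (hg : DifferentiableOn ℂ g {s : ℂ | α < s.re})
    (heq : ∀ s : ℂ, β < s.re → f s = g s) :
    ∀ s : ℂ, α < s.re → f s = g s := by
  have hop : IsOpen {s : ℂ | α < s.re} := isOpen_lt continuous_const Complex.continuous_re
  have hfa := hf.analyticOnNhd hop
  have hga := hg.analyticOnNhd hop
  have hpre : IsPreconnected {s : ℂ | α < s.re} := (convex_halfSpace_re_gt α).isPreconnected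
  have hz₀ : ((β + 1 : ℝ) : ℂ) ∈ {s : ℂ | α < s.re} := by
    simp only [Set.mem_setOf_eq, Complex.ofReal_re]; linarith
  have hev : f =ᶠ[𝓝 ((β + 1 : ℝ) : ℂ)] g := by
    have hmem : {s : ℂ | β < s.re} ∈ 𝓝 ((β + 1 : ℝ) : ℂ) :=
      (isOpen_lt continuous_const Complex.continuous_re).mem_nhds
        (by simp only [Set.mem_setOf_eq, Complex.ofReal_re]; linarith)
    filter_upwards [hmem] with s hs using heq s hs
  exact fun s hs => hfa.eqOn_of_preconnected_of_eventuallyEq hga hpre hz₀ hev hs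

set_option maxHeartbeats 1600000 in
/-- Completeness of `D∞^ext(λ)` when `L(λ) = limsup (log N)/λ_N < ∞`. -/
theorem dExt_closed_of_L_finite (lam : ℕ → ℝ) (hfreq : IsFrequency lam)
    (hbd : IsBoundedUnder (· ≤ ·) atTop (fun N : ℕ => Real.log N / lam N))
    (a : ℕ → ℕ → ℂ) (f : ℕ → ℂ → ℂ) (M : ℕ → ℝ) (F : ℂ → ℂ)
    (hmem : ∀ j : ℕ, MemDExt lam (a j) (f j) (M j))
    (hunif : ∀ δ : ℝ, 0 < δ → ∃ j₀ : ℕ, ∀ j : ℕ, j₀ ≤ j → ∀ s : ℂ, 0 < s.re →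
      ‖f j s - F s‖ ≤ δ) :
    ∃ b : ℕ → ℂ,
      (∀ n : ℕ, 1 ≤ n → Tendsto (fun j => a j n) atTop (nhds (b n))) ∧
      (∀ s : ℂ, limsup (fun N : ℕ => Real.log N / lam N) atTop < s.re →
        Summable (fun n : ℕ =>
          ‖b (n + 1) * Complex.exp (-(lam (n + 1) : ℂ) * s)‖) ∧
        (∑' n : ℕ, b (n + 1) * Complex.exp (-(lam (n + 1) : ℂ) * s)) = F s) ∧
      (∃ M' : ℝ, MemDExt lam b F M') := by
  classical
  obtain ⟨hmono, h1, htends⟩ := hfreq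
  set Lr := limsup (fun N : ℕ => Real.log N / lam N) atTop with hLrdef
  have hLr0 : 0 ≤ Lr := limsup_nonneg hbd htends
  -- absolute convergence data for each `j`
  choose A hA0 hAsum hAeq using fun j => memDExt_absConv hmono h1 hbd htends (hmem j)
  -- coefficient bound `|a j n| ≤ M j`
  have hMj : ∀ (j : ℕ) (n : ℕ), 1 ≤ n → ‖a j n‖ ≤ M j := by
    intro j n hn
    exact coeff_bound hmono h1 (a j) (f j) (M j) (A j) (hA0 j) (hmem j).2.1 (hmem j).2.2
      (hAsum j (A j + 1) (by linarith)) (hAeq j) hn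
  -- coefficient bound for differences
  have hdiff2 : ∀ (δ : ℝ), 0 < δ → ∀ (j₀ : ℕ),
      (∀ j, j₀ ≤ j → ∀ s : ℂ, 0 < s.re → ‖f j s - F s‖ ≤ δ) →
      ∀ j k, j₀ ≤ j → j₀ ≤ k → ∀ n, 1 ≤ n →
      ‖a j n - a k n‖ ≤ 2*δ := by
    intro δ hδ j₀ hj₀ j k hj hk n hn
    set A' : ℝ := max (A j) (A k) with hA'
    have hAj : A j ≤ A' := le_max_left _ _
    have hAk : A k ≤ A' := le_max_right _ _
    have hA'0 : 0 ≤ A' := (hA0 j).trans hAj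
    refine coeff_bound hmono h1 (fun n => a j n - a k n) (fun s => f j s - f k s)
      (2*δ) A' hA'0 ((hmem j).2.1.sub (hmem k).2.1) ?_ ?_ ?_ hn
    · intro s hs
      calc ‖f j s - f k s‖
          ≤ ‖f j s - F s‖ + ‖F s - f k s‖ :=
            norm_sub_le_norm_sub_add_norm_sub _ _ _
        _ ≤ δ + δ := by
            refine add_le_add (hj₀ j hj s hs) ?_
            rw [norm_sub_rev]
            exact hj₀ k hk s hs
        _ = 2*δ := by ring
    · -- summability of the difference coefficients
      refine Summable.of_nonneg_of_le (fun m => by positivity) (fun m => ?_)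
        ((hAsum j (A'+1) (by linarith)).add (hAsum k (A'+1) (by linarith)))
      calc ‖a j (m+1) - a k (m+1)‖ * Real.exp (-(lam (m+1)) * (A'+1))
          ≤ (‖a j (m+1)‖ + ‖a k (m+1)‖) *
              Real.exp (-(lam (m+1)) * (A'+1)) := by
            refine mul_le_mul_of_nonneg_right ?_ (Real.exp_pos _).le
            exact (norm_sub_le_norm_sub_add_norm_sub _ 0 _).trans (by simp)
        _ = _ := by ring
    · -- the difference series represents `f j - f k`
      intro s hs
      have hsj : A j < s.re := lt_of_le_of_lt hAj hs
      have hsk : A k < s.re := lt_of_le_of_lt hAk hs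
      have hsumj : Summable (fun m : ℕ => a j (m+1) * Complex.exp (-(lam (m+1) : ℂ) * s)) :=
        Summable.of_norm (by
          refine (hAsum j s.re hsj).congr fun m => ?_
          rw [term_abs])
      have hsumk : Summable (fun m : ℕ => a k (m+1) * Complex.exp (-(lam (m+1) : ℂ) * s)) :=
        Summable.of_norm (by
          refine (hAsum k s.re hsk).congr fun m => ?_
          rw [term_abs])
      show f j s - f k s = _
      rw [hAeq j s hsj, hAeq k s hsk, ← Summable.tsum_sub hsumj hsumk]
      exact tsum_congr fun m => by ring
  -- the coefficient limits
  set b : ℕ → ℂ := fun n => limUnder atTop (fun j => a j n) with hbdef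
  have hbtend : ∀ n, 1 ≤ n → Tendsto (fun j => a j n) atTop (𝓝 (b n)) := by
    intro n hn
    have hcauchy : CauchySeq (fun j => a j n) := by
      rw [Metric.cauchySeq_iff]
      intro εc hεc
      obtain ⟨j₀, hj₀⟩ := hunif (εc/3) (by linarith)
      refine ⟨j₀, fun j hj k hk => ?_⟩
      rw [Complex.dist_eq]
      calc ‖a j n - a k n‖ ≤ 2*(εc/3) :=
            hdiff2 (εc/3) (by linarith) j₀ hj₀ j k hj hk n hn
        _ < εc := by linarith
    exact hcauchy.tendsto_limUnder
  have hbapprox : ∀ (δ : ℝ), 0 < δ → ∃ j₀, ∀ j, j₀ ≤ j → ∀ n, 1 ≤ n →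
      ‖a j n - b n‖ ≤ 2*δ := by
    intro δ hδ
    obtain ⟨j₀, hj₀⟩ := hunif δ hδ
    refine ⟨j₀, fun j hj n hn => ?_⟩
    have hlim : Tendsto (fun k => ‖a j n - a k n‖) atTop
        (𝓝 (‖a j n - b n‖)) :=
      (continuous_norm.tendsto _).comp (tendsto_const_nhds.sub (hbtend n hn))
    exact le_of_tendsto hlim (Filter.eventually_atTop.2
      ⟨j₀, fun k hk => hdiff2 δ hδ j₀ hj₀ j k hj hk n hn⟩)
  -- uniform bound on the limit coefficients
  obtain ⟨j₁, hj₁⟩ := hbapprox 1 one_pos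
  have hbB : ∀ n, 1 ≤ n → ‖b n‖ ≤ M j₁ + 2 := by
    intro n hn
    calc ‖b n‖ = ‖a j₁ n - (a j₁ n - b n)‖ := by ring_nf
      _ ≤ ‖a j₁ n‖ + ‖a j₁ n - b n‖ :=
          (norm_sub_le_norm_sub_add_norm_sub _ 0 _).trans (by simp [norm_sub_rev])
      _ ≤ M j₁ + 2*1 := add_le_add (hMj j₁ n hn) (hj₁ j₁ le_rfl n hn)
      _ = M j₁ + 2 := by ring
  -- summability of the limit series on `Re s > Lr`
  have hexp : ∀ σ : ℝ, Lr < σ → Summable (fun m : ℕ => Real.exp (-(lam (m+1)) * σ)) :=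
    fun σ hσ => (summable_nat_add_iff 1).2 (summable_exp_neg hmono h1 hbd htends hσ)
  have hbsum : ∀ σ : ℝ, Lr < σ →
      Summable (fun m : ℕ => ‖b (m+1)‖ * Real.exp (-(lam (m+1)) * σ)) := by
    intro σ hσ
    refine Summable.of_nonneg_of_le (fun m => by positivity) (fun m => ?_)
      (((hexp σ hσ).mul_left (M j₁ + 2)))
    exact mul_le_mul_of_nonneg_right (hbB (m+1) (by omega)) (Real.exp_pos _).le
  have hasum' : ∀ j, ∀ σ : ℝ, Lr < σ →
      Summable (fun m : ℕ => ‖a j (m+1)‖ * Real.exp (-(lam (m+1)) * σ)) := by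
    intro j σ hσ
    refine Summable.of_nonneg_of_le (fun m => by positivity) (fun m => ?_)
      ((hexp σ hσ).mul_left (M j))
    exact mul_le_mul_of_nonneg_right (hMj j (m+1) (by omega)) (Real.exp_pos _).le
  -- each `f j` is represented by its series on all of `Re s > Lr`
  have hfeq : ∀ j, ∀ s : ℂ, Lr < s.re →
      f j s = ∑' m : ℕ, a j (m+1) * Complex.exp (-(lam (m+1) : ℂ) * s) := by
    intro j
    refine eqOn_halfplane (le_max_right (A j) Lr) ?_ (diffOn_tsum hmono h1 (hasum' j)) ?_
    · refine ((hmem j).2.1.mono ?_)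
      intro s hs
      have : Lr < s.re := hs
      exact lt_of_le_of_lt hLr0 this
    · exact fun s hs => hAeq j s (lt_of_le_of_lt (le_max_left _ _) hs)
  -- the limit series represents `F` on `Re s > Lr`
  have hbsummable : ∀ s : ℂ, Lr < s.re →
      Summable (fun m : ℕ => b (m+1) * Complex.exp (-(lam (m+1) : ℂ) * s)) := by
    intro s hs
    exact Summable.of_norm ((hbsum s.re hs).congr fun m => by
      rw [term_abs])
  have hasummable : ∀ j, ∀ s : ℂ, Lr < s.re →
      Summable (fun m : ℕ => a j (m+1) * Complex.exp (-(lam (m+1) : ℂ) * s)) := by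
    intro j s hs
    exact Summable.of_norm ((hasum' j s.re hs).congr fun m => by
      rw [term_abs])
  have hFeq : ∀ s : ℂ, Lr < s.re →
      (∑' m : ℕ, b (m+1) * Complex.exp (-(lam (m+1) : ℂ) * s)) = F s := by
    intro s hs
    have hsre0 : 0 < s.re := lt_of_le_of_lt hLr0 hs
    set D : ℝ := ‖(∑' m : ℕ, b (m+1) * Complex.exp (-(lam (m+1) : ℂ) * s)) - F s‖
      with hD
    set SS : ℝ := ∑' m : ℕ, Real.exp (-(lam (m+1)) * s.re) with hSS
    have hSS0 : 0 ≤ SS := tsum_nonneg fun m => (Real.exp_pos _).le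
    have hDle : ∀ δ : ℝ, 0 < δ → D ≤ 2*δ*SS + δ := by
      intro δ hδ
      obtain ⟨j₀, hj₀⟩ := hunif δ hδ
      obtain ⟨j₀', hj₀'⟩ := hbapprox δ hδ
      set j : ℕ := max j₀ j₀' with hj
      have h1j : j₀ ≤ j := le_max_left _ _
      have h2j : j₀' ≤ j := le_max_right _ _
      have hsplit : (∑' m : ℕ, b (m+1) * Complex.exp (-(lam (m+1) : ℂ) * s)) - F s =
          ((∑' m : ℕ, b (m+1) * Complex.exp (-(lam (m+1) : ℂ) * s)) -
            (∑' m : ℕ, a j (m+1) * Complex.exp (-(lam (m+1) : ℂ) * s))) + (f j s - F s) := by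
        rw [hfeq j s hs]; ring
      rw [hD, hsplit]
      refine (norm_add_le _ _).trans (add_le_add ?_ (hj₀ j h1j s hsre0))
      rw [← Summable.tsum_sub (hbsummable s hs) (hasummable j s hs)]
      have hterm2 : ∀ m : ℕ, ‖(b (m+1) * Complex.exp (-(lam (m+1) : ℂ) * s)) -
          (a j (m+1) * Complex.exp (-(lam (m+1) : ℂ) * s))‖ ≤
          2*δ * Real.exp (-(lam (m+1)) * s.re) := by
        intro m
        rw [← sub_mul, term_abs]
        refine mul_le_mul_of_nonneg_right ?_ (Real.exp_pos _).le
        rw [norm_sub_rev]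
        exact hj₀' j h2j (m+1) (by omega)
      have hsubnorm : Summable (fun m : ℕ => ‖(b (m+1) * Complex.exp (-(lam (m+1) : ℂ) * s)) -
          (a j (m+1) * Complex.exp (-(lam (m+1) : ℂ) * s))‖) :=
        Summable.of_nonneg_of_le (fun m => norm_nonneg _) hterm2
          ((hexp s.re hs).mul_left (2*δ))
      calc ‖∑' m : ℕ, ((b (m+1) * Complex.exp (-(lam (m+1) : ℂ) * s)) -
              (a j (m+1) * Complex.exp (-(lam (m+1) : ℂ) * s)))‖
          ≤ ∑' m : ℕ, ‖(b (m+1) * Complex.exp (-(lam (m+1) : ℂ) * s)) -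
              (a j (m+1) * Complex.exp (-(lam (m+1) : ℂ) * s))‖ := by
            exact norm_tsum_le_tsum_norm hsubnorm
        _ ≤ ∑' m : ℕ, 2*δ * Real.exp (-(lam (m+1)) * s.re) := by
            refine Summable.tsum_le_tsum hterm2 hsubnorm ((hexp s.re hs).mul_left (2*δ))
        _ = 2*δ*SS := by rw [tsum_mul_left, hSS]
    have hD0 : 0 ≤ D := norm_nonneg _
    have hDzero : D = 0 := by
      by_contra hne
      have hpos : 0 < D := lt_of_le_of_ne hD0 (Ne.symm hne)
      have := hDle (D / (2*(2*SS+1))) (by positivity)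
      have h2 : 2*(D / (2*(2*SS+1)))*SS + (D / (2*(2*SS+1))) = D/2 := by
        field_simp
      rw [h2] at this
      linarith
    rw [hD] at hDzero
    have := norm_eq_zero.1 hDzero
    exact sub_eq_zero.1 this
  refine ⟨b, hbtend, ?_, ?_⟩
  · intro s hs
    constructor
    · refine ((hbsum s.re hs).congr fun m => ?_)
      rw [term_abs]
    · exact hFeq s hs
  · -- membership of the limit
    obtain ⟨j₂, hj₂⟩ := hunif 1 one_pos
    refine ⟨M j₂ + 1, ⟨Lr, ?_, ?_⟩, ?_, ?_⟩
    · intro s hs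
      exact ⟨_, by
        have := (hbsummable s hs).hasSum.tendsto_sum_nat
        exact this.congr fun N => (partialSum_eq_range lam b N s).symm⟩
    · intro s hs
      rw [max_eq_left hLr0] at hs
      have ht := (hbsummable s hs).hasSum.tendsto_sum_nat
      rw [hFeq s hs] at ht
      exact ht.congr fun N => (partialSum_eq_range lam b N s).symm
    · -- differentiability of F
      have htu : TendstoUniformlyOn (fun j s => f j s) F atTop {s : ℂ | 0 < s.re} := by
        rw [Metric.tendstoUniformlyOn_iff]
        intro εc hεc
        obtain ⟨j₀, hj₀⟩ := hunif (εc/2) (by linarith)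
        refine Filter.eventually_atTop.2 ⟨j₀, fun j hj x hx => ?_⟩
        rw [dist_comm, Complex.dist_eq]
        calc ‖f j x - F x‖ ≤ εc/2 := hj₀ j hj x hx
          _ < εc := by linarith
      exact htu.tendstoLocallyUniformlyOn.differentiableOn
        (Filter.Eventually.of_forall fun j => (hmem j).2.1)
        (isOpen_lt continuous_const Complex.continuous_re)
    · intro s hs
      calc ‖F s‖ = ‖f j₂ s - (f j₂ s - F s)‖ := by ring_nf
        _ ≤ ‖f j₂ s‖ + ‖f j₂ s - F s‖ :=
            (norm_sub_le_norm_sub_add_norm_sub _ 0 _).trans (by simp [norm_sub_rev])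
        _ ≤ M j₂ + 1 := add_le_add ((hmem j₂).2.2 s hs) (hj₂ j₂ le_rfl s hs)
end

section
/- Let λ be a frequency with limsup_{N→∞} (log N)/λ_N = 0, and let (a_n) belong to D∞^ext(λ) with extension f and bound M. Then for every ε > 0 the series ∑_n a_n e^{−λ_n s} converges absolutely and uniformly on {s : Re s > ε}, and its sum equals f there; that is, λ satisfies Bohr's theorem. -/
open Filter Finset Complex MeasureTheory Topology



namespace BohrAux

/-- monotonicity of the frequency for indices ≥ 1 -/
lemma lam_mono {lam : ℕ → ℝ} (h : ∀ n : ℕ, 1 ≤ n → lam n < lam (n + 1)) :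
    ∀ m n : ℕ, 1 ≤ m → m ≤ n → lam m ≤ lam n := by
  intro m n hm hmn
  induction n with
  | zero => omega
  | succ k ih =>
    rcases Nat.lt_or_ge m (k+1) with h1 | h1
    · have hk : 1 ≤ k := by omega
      exact le_trans (ih (by omega)) (h k hk).le
    · have : m = k + 1 := by omega
      simp [this]

lemma lam_strict {lam : ℕ → ℝ} (h : ∀ n : ℕ, 1 ≤ n → lam n < lam (n + 1)) :
    ∀ m n : ℕ, 1 ≤ m → m < n → lam m < lam n := by
  intro m n hm hmn
  have h1 : lam m < lam (m+1) := h m hm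
  exact lt_of_lt_of_le h1 (lam_mono h (m+1) n (by omega) (by omega))

lemma lam_nonneg {lam : ℕ → ℝ} (h : ∀ n : ℕ, 1 ≤ n → lam n < lam (n + 1))
    (h1 : 0 ≤ lam 1) : ∀ n : ℕ, 1 ≤ n → 0 ≤ lam n :=
  fun n hn => le_trans h1 (lam_mono h 1 n le_rfl hn)

/-- gap around an index -/
lemma gap {lam : ℕ → ℝ} (h : ∀ n : ℕ, 1 ≤ n → lam n < lam (n + 1)) {n : ℕ} (hn : 1 ≤ n) :
    ∃ δ : ℝ, 0 < δ ∧ ∀ m : ℕ, 1 + m ≠ n → δ ≤ |lam n - lam (1 + m)| := by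
  rcases Nat.lt_or_ge n 2 with h2 | h2
  · have hn1 : n = 1 := by omega
    subst hn1
    refine ⟨lam 2 - lam 1, by have := h 1 le_rfl; simpa using this, ?_⟩
    intro m hm
    have hm1 : 1 ≤ m := by omega
    have : lam 2 ≤ lam (1 + m) := lam_mono h 2 (1+m) (by omega) (by omega)
    rw [le_abs]
    right
    have h11 : lam 1 < lam 2 := h 1 le_rfl
    linarith
  · refine ⟨min (lam (n+1) - lam n) (lam n - lam (n-1)), ?_, ?_⟩
    · apply lt_min
      · have := h n hn; linarith
      · have : lam (n-1) < lam n := by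
          have := h (n-1) (by omega)
          have hne : n - 1 + 1 = n := by omega
          rwa [hne] at this
        linarith
    · intro m hm
      rcases Nat.lt_or_ge (1+m) n with hlt | hge
      · have : lam (1+m) ≤ lam (n-1) := lam_mono h (1+m) (n-1) (by omega) (by omega)
        rw [le_abs]
        left
        have := min_le_right (lam (n+1) - lam n) (lam n - lam (n-1))
        linarith
      · have hgt : n < 1 + m := by omega
        have : lam (n+1) ≤ lam (1+m) := lam_mono h (n+1) (1+m) (by omega) (by omega)
        rw [le_abs]
        right
        have := min_le_left (lam (n+1) - lam n) (lam n - lam (n-1))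
        linarith

/-- summability of `exp (-λ_n t)` for `t > 0` when `L(λ) = 0` -/
lemma summable_exp_neg {lam : ℕ → ℝ}
    (hinf : Tendsto lam atTop atTop)
    (hL : Tendsto (fun N : ℕ => Real.log N / lam N) atTop (nhds 0))
    {t : ℝ} (ht : 0 < t) :
    Summable (fun m : ℕ => Real.exp (-lam (1 + m) * t)) := by
  have h1 : ∀ᶠ n : ℕ in atTop, Real.log n / lam n < t / 2 :=
    hL.eventually (eventually_lt_nhds (by positivity))
  have h2 : ∀ᶠ n : ℕ in atTop, (1:ℝ) ≤ lam n := hinf.eventually (eventually_ge_atTop 1)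
  have h3 : ∀ᶠ n : ℕ in atTop, Real.exp (-lam n * t) ≤ (((n:ℝ)) ^ (2:ℝ))⁻¹ := by
    filter_upwards [h1, h2, eventually_ge_atTop 1] with n hn1 hn2 hn3
    have hnpos : (0:ℝ) < n := by exact_mod_cast hn3
    have hlogn : Real.log n < t / 2 * lam n := by
      rw [div_lt_iff₀ (by linarith)] at hn1
      linarith [hn1]
    have : -lam n * t ≤ -2 * Real.log n := by nlinarith
    calc Real.exp (-lam n * t) ≤ Real.exp (-2 * Real.log n) := Real.exp_le_exp.2 this
      _ = (((n:ℝ)) ^ (2:ℝ))⁻¹ := by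
          rw [← Real.rpow_neg hnpos.le, Real.rpow_def_of_pos hnpos]
          ring_nf
  have h4 : Summable (fun n : ℕ => (((n:ℝ)) ^ (2:ℝ))⁻¹) :=
    Real.summable_nat_rpow_inv.2 (by norm_num)
  have h5 : Summable (fun n : ℕ => Real.exp (-lam n * t)) := by
    rcases h3.exists_forall_of_atTop with ⟨N, hN⟩
    · refine (summable_nat_add_iff N).1 ?_
      refine Summable.of_nonneg_of_le (fun m => (Real.exp_pos _).le)
        (fun m => hN (m + N) (by omega)) ((summable_nat_add_iff N).2 h4)
  exact (summable_nat_add_iff 1).2 h5 |>.congr (fun m => by rw [Nat.add_comm])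

end BohrAux


namespace BohrAux

lemma coef_bound {lam : ℕ → ℝ} {a : ℕ → ℂ} {f : ℂ → ℂ} {M C σ₁ σ₂ : ℝ} {n : ℕ}
    (hn : 1 ≤ n)
    (hδex : ∃ δ : ℝ, 0 < δ ∧ ∀ m : ℕ, 1 + m ≠ n → δ ≤ |lam n - lam (1 + m)|)
    (hlamnn : ∀ k : ℕ, 1 ≤ k → 0 ≤ lam k)
    (hσ₁ : 0 < σ₁) (hσ₂ : σ₂ = σ₁ + 1)
    (hsum : Summable (fun m : ℕ => Real.exp (-lam (1 + m) * 1)))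
    (hC : ∀ m : ℕ, ‖a (1 + m)‖ * Real.exp (-lam (1 + m) * σ₁) ≤ C)
    (hf : ∀ t : ℝ, f ((σ₂ : ℂ) + t * I) =
      ∑' m : ℕ, a (1 + m) * Complex.exp (-(lam (1 + m) : ℂ) * ((σ₂ : ℂ) + t * I)))
    (hdf : DifferentiableOn ℂ f {s : ℂ | 0 < s.re})
    (hbd : ∀ s : ℂ, 0 < s.re → ‖f s‖ ≤ M) :
    ‖a n‖ ≤ M := by
  obtain ⟨δ, hδ, hδm⟩ := hδex
  have hσ₂pos : 0 < σ₂ := by linarith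
  have hMnn : 0 ≤ M := le_trans (norm_nonneg _) (hbd 1 (by norm_num))
  have hCnn : 0 ≤ C := le_trans (by positivity) (hC 0)
  -- the auxiliary function and its building blocks
  set F : ℂ → ℂ := fun z => f z * Complex.exp ((lam n : ℂ) * z) with hF
  set θ : ℕ → ℝ := fun m => lam n - lam (1 + m) with hθ
  set A : ℕ → ℂ := fun m => a (1 + m) * Complex.exp ((θ m * σ₂ : ℝ) : ℂ) with hA
  set Fm : ℕ → ℝ → ℂ := fun m t => A m * Complex.exp (((θ m : ℂ) * I) * t) with hFm
  set r : ℕ → ℝ := fun m => ‖a (1 + m)‖ * Real.exp (θ m * σ₂) with hr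
  have habsA : ∀ m, ‖A m‖ = r m := by
    intro m
    simp [hA, hr, norm_mul, Complex.norm_exp]
  have habsFm : ∀ m (t : ℝ), ‖Fm m t‖ = r m := by
    intro m t
    simp only [hFm, norm_mul, Complex.norm_exp]
    rw [habsA]
    have : (((θ m : ℂ) * I) * (t : ℂ)).re = 0 := by simp [Complex.mul_re]
    rw [this, Real.exp_zero, mul_one]
  -- summability of r
  have hrle : ∀ m, r m ≤ C * Real.exp (lam n * σ₂) * Real.exp (-lam (1 + m) * 1) := by
    intro m
    have : Real.exp (θ m * σ₂) =
        Real.exp (-lam (1 + m) * σ₁) * Real.exp (lam n * σ₂) * Real.exp (-lam (1 + m) * 1) := by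
      rw [← Real.exp_add, ← Real.exp_add]; congr 1; rw [hθ]; ring_nf; rw [hσ₂]; ring
    rw [hr]
    calc ‖a (1 + m)‖ * Real.exp (θ m * σ₂)
        = (‖a (1 + m)‖ * Real.exp (-lam (1 + m) * σ₁)) *
            Real.exp (lam n * σ₂) * Real.exp (-lam (1 + m) * 1) := by rw [this]; ring
      _ ≤ C * Real.exp (lam n * σ₂) * Real.exp (-lam (1 + m) * 1) := by
          exact mul_le_mul_of_nonneg_right
            (mul_le_mul_of_nonneg_right (hC m) (Real.exp_pos _).le) (Real.exp_pos _).le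
  have hrnn : ∀ m, 0 ≤ r m := fun m => by positivity
  have hrsum : Summable r :=
    Summable.of_nonneg_of_le hrnn hrle ((hsum.mul_left _))
  set Sr : ℝ := ∑' m, r m with hSr
  have hSrnn : 0 ≤ Sr := tsum_nonneg hrnn
  -- Step A : mean value on the line Re = σ₂
  have hA2 : ∀ T : ℝ, 0 < T →
      ‖(∫ t in (-T)..T, F ((σ₂ : ℂ) + t * I)) - 2 * T * a n‖ ≤ 2 / δ * Sr := by
    intro T hT
    have hTle : -T ≤ T := by linarith
    -- pointwise expansion of F on the line
    have hptw : ∀ t : ℝ, F ((σ₂ : ℂ) + (t : ℝ) * I) = ∑' m, Fm m t := by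
      intro t
      show f ((σ₂:ℂ) + t*I) * Complex.exp ((lam n : ℂ) * ((σ₂:ℂ)+t*I)) = _
      rw [hf t, ← tsum_mul_right]
      congr 1; funext m
      show a (1+m) * Complex.exp (-(lam (1+m) : ℂ) * ((σ₂:ℂ)+t*I)) *
        Complex.exp ((lam n : ℂ) * ((σ₂:ℂ)+t*I)) =
        a (1+m) * Complex.exp ((θ m * σ₂ : ℝ) : ℂ) * Complex.exp (((θ m : ℂ) * I) * t)
      rw [mul_assoc, mul_assoc, ← Complex.exp_add, ← Complex.exp_add]
      congr 2
      rw [hθ]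
      push_cast
      ring
    -- integrability and norm integrals of each term
    have hFmInt : ∀ m, Integrable (Fm m) (volume.restrict (Set.Ioc (-T) T)) := by
      intro m
      apply Continuous.integrableOn_Ioc
      exact continuous_const.mul
        (Complex.continuous_exp.comp (continuous_const.mul Complex.continuous_ofReal))
    have hnormint : ∀ m, (∫ t in Set.Ioc (-T) T, ‖Fm m t‖) = 2 * T * r m := by
      intro m
      simp only [habsFm]
      rw [MeasureTheory.setIntegral_const, measureReal_def, Real.volume_Ioc,
        ENNReal.toReal_ofReal (by linarith), smul_eq_mul]
      ring
    have hsumnorm : Summable (fun m => ∫ t in Set.Ioc (-T) T, ‖Fm m t‖) :=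
      (hrsum.mul_left (2 * T)).congr (fun m => (hnormint m).symm)
    set J : ℕ → ℂ := fun m => ∫ t in Set.Ioc (-T) T, Fm m t with hJ
    -- interchange of sum and integral
    have hswap : (∫ t in (-T)..T, F ((σ₂ : ℂ) + (t:ℝ) * I)) = ∑' m, J m := by
      rw [intervalIntegral.integral_of_le hTle]
      have h1 : (∫ t in Set.Ioc (-T) T, F ((σ₂ : ℂ) + (t:ℝ) * I)) =
          ∫ t in Set.Ioc (-T) T, ∑' m, Fm m t := by
        apply MeasureTheory.integral_congr_ae
        filter_upwards with t using hptw t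
      rw [h1]
      exact (MeasureTheory.integral_tsum_of_summable_integral_norm hFmInt hsumnorm).symm
    have hJle : ∀ m, ‖J m‖ ≤ 2 * T * r m := by
      intro m
      rw [← hnormint m]
      exact MeasureTheory.norm_integral_le_integral_norm _
    have hJsum : Summable J :=
      Summable.of_norm_bounded (hrsum.mul_left (2 * T)) hJle
    -- the distinguished term
    have hn1 : 1 + (n - 1) = n := by omega
    have hθn : θ (n-1) = 0 := by rw [hθ]; simp only [hn1, sub_self]
    have hJn : J (n-1) = 2 * T * a n := by
      have hconst : ∀ t : ℝ, Fm (n-1) t = a n := by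
        intro t
        show a (1+(n-1)) * Complex.exp ((θ (n-1) * σ₂ : ℝ) : ℂ) *
          Complex.exp (((θ (n-1) : ℂ) * I) * t) = a n
        rw [hθn, hn1]
        norm_num
      rw [hJ]
      simp only [hconst]
      rw [MeasureTheory.setIntegral_const, measureReal_def, Real.volume_Ioc,
        ENNReal.toReal_ofReal (by linarith), Complex.real_smul]
      push_cast
      ring
    -- bound on the other terms
    have hJbound : ∀ m, 1 + m ≠ n → ‖J m‖ ≤ 2 / δ * r m := by
      intro m hm
      have hδle := hδm m hm
      have hθm : θ m ≠ 0 := by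
        intro h
        have h' : lam n - lam (1 + m) = 0 := h
        rw [h'] at hδle
        simp at hδle
        linarith
      have hcne : ((θ m : ℂ)) * I ≠ 0 := by
        simp [Complex.I_ne_zero, Complex.ofReal_ne_zero, hθm]
      have hJval : J m = A m * ((Complex.exp (((θ m : ℂ) * I) * (T:ℝ)) -
          Complex.exp (((θ m : ℂ) * I) * ((-T : ℝ):ℂ))) / ((θ m : ℂ) * I)) := by
        rw [hJ]
        simp only
        rw [← intervalIntegral.integral_of_le hTle]
        show (∫ t in (-T)..T, A m * Complex.exp (((θ m : ℂ) * I) * (t:ℝ))) = _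
        rw [intervalIntegral.integral_const_mul, integral_exp_mul_complex hcne]
      have habs1 : ∀ u : ℝ, ‖Complex.exp (((θ m : ℂ) * I) * (u:ℝ))‖ = 1 := by
        intro u
        rw [Complex.norm_exp]
        have : (((θ m : ℂ) * I) * (u:ℝ)).re = 0 := by simp [Complex.mul_re]
        rw [this, Real.exp_zero]
      have hquot : ‖(Complex.exp (((θ m : ℂ) * I) * (T:ℝ)) -
          Complex.exp (((θ m : ℂ) * I) * ((-T : ℝ):ℂ))) / ((θ m : ℂ) * I)‖ ≤ 2 / δ := by
        rw [norm_div]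
        have hden : ‖(θ m : ℂ) * I‖ = |θ m| := by
          rw [norm_mul, Complex.norm_I, mul_one, Complex.norm_real, Real.norm_eq_abs]
        rw [hden]
        have hnum : ‖Complex.exp (((θ m : ℂ) * I) * (T:ℝ)) -
            Complex.exp (((θ m : ℂ) * I) * ((-T : ℝ):ℂ))‖ ≤ 2 := by
          refine le_trans (norm_sub_le _ _) ?_
          rw [habs1, habs1]
          norm_num
        calc ‖Complex.exp (((θ m : ℂ) * I) * (T:ℝ)) -
              Complex.exp (((θ m : ℂ) * I) * ((-T : ℝ):ℂ))‖ / |θ m|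
            ≤ 2 / |θ m| := by
              gcongr
          _ ≤ 2 / δ := by
              apply div_le_div_of_nonneg_left (by norm_num) hδ hδle
      rw [hJval, norm_mul, habsA]
      calc r m * ‖(Complex.exp (((θ m : ℂ) * I) * (T:ℝ)) -
            Complex.exp (((θ m : ℂ) * I) * ((-T : ℝ):ℂ))) / ((θ m : ℂ) * I)‖
          ≤ r m * (2 / δ) := mul_le_mul_of_nonneg_left hquot (hrnn m)
        _ = 2 / δ * r m := by ring
    -- assemble
    rw [hswap, hJsum.tsum_eq_add_tsum_ite (n-1), hJn]
    have hsimp : (2 * (T:ℂ) * a n + ∑' m, ite (m = n-1) 0 (J m)) - 2 * (T:ℂ) * a n =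
        ∑' m, ite (m = n-1) 0 (J m) := by ring
    rw [hsimp]
    have hitele : ∀ m, ‖ite (m = n-1) (0:ℂ) (J m)‖ ≤ 2 / δ * r m := by
      intro m
      by_cases h : m = n-1
      · simp [h]
        positivity
      · simp only [h, if_false]
        exact hJbound m (by omega)
    have hitesum : Summable (fun m => ‖ite (m = n-1) (0:ℂ) (J m)‖) :=
      Summable.of_nonneg_of_le (fun m => norm_nonneg _) hitele (hrsum.mul_left (2/δ))
    calc ‖∑' m, ite (m = n-1) 0 (J m)‖
        ≤ ∑' m, ‖ite (m = n-1) (0:ℂ) (J m)‖ := by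
          exact norm_tsum_le_tsum_norm hitesum
      _ ≤ ∑' m, 2 / δ * r m := Summable.tsum_le_tsum hitele hitesum (hrsum.mul_left (2/δ))
      _ = 2 / δ * Sr := by rw [tsum_mul_left]
  -- Step B : Cauchy's theorem moves the line
  have hB : ∀ σ : ℝ, 0 < σ → σ < σ₂ → ∀ T : ℝ, 0 < T →
      ‖(∫ t in (-T)..T, F ((σ₂ : ℂ) + t * I)) - ∫ t in (-T)..T, F ((σ : ℂ) + t * I)‖ ≤
        2 * (σ₂ * (M * Real.exp (lam n * σ₂))) := by
    intro σ hσ hσσ₂ T hT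
    have hσle : σ ≤ σ₂ := hσσ₂.le
    have hTle : -T ≤ T := by linarith
    -- differentiability on the rectangle
    have hsub : Set.uIcc σ σ₂ ×ℂ Set.uIcc (-T) T ⊆ {s : ℂ | 0 < s.re} := by
      intro z hz
      rw [Complex.mem_reProdIm] at hz
      have h1 : z.re ∈ Set.Icc σ σ₂ := by rw [← Set.uIcc_of_le hσle]; exact hz.1
      exact lt_of_lt_of_le hσ h1.1
    have hdiffF : DifferentiableOn ℂ F (Set.uIcc σ σ₂ ×ℂ Set.uIcc (-T) T) := by
      apply DifferentiableOn.mul (hdf.mono hsub)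
      exact (((differentiable_const ((lam n : ℂ))).mul differentiable_id).cexp).differentiableOn
    have E := Complex.integral_boundary_rect_eq_zero_of_differentiableOn F
      ⟨σ, -T⟩ ⟨σ₂, T⟩ hdiffF
    simp only [smul_eq_mul] at E
    have E2 : I * ((∫ y in (-T)..T, F ((σ₂ : ℂ) + (y : ℝ) * I)) -
        ∫ y in (-T)..T, F ((σ : ℂ) + (y : ℝ) * I)) =
        (∫ x in σ..σ₂, F ((x : ℂ) + ((T : ℝ) : ℂ) * I)) -
        ∫ x in σ..σ₂, F ((x : ℂ) + ((-T : ℝ) : ℂ) * I) := by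
      linear_combination E
    -- bound on horizontal segments
    have hbound : ∀ y : ℝ, ∀ x ∈ Set.uIoc σ σ₂,
        ‖F ((x : ℂ) + ((y : ℝ) : ℂ) * I)‖ ≤ M * Real.exp (lam n * σ₂) := by
      intro y x hx
      rw [Set.uIoc_of_le hσle] at hx
      have hxpos : (0:ℝ) < x := lt_trans hσ hx.1
      have hre : ((x : ℂ) + ((y : ℝ) : ℂ) * I).re = x := by simp
      have h1 := hbd ((x : ℂ) + ((y : ℝ) : ℂ) * I) (by rw [hre]; exact hxpos)
      have h2 : (((lam n : ℂ)) * ((x : ℂ) + ((y : ℝ) : ℂ) * I)).re = lam n * x := by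
        simp [Complex.mul_re]
      calc ‖F ((x : ℂ) + ((y : ℝ) : ℂ) * I)‖
          = ‖f ((x : ℂ) + ((y : ℝ) : ℂ) * I)‖ *
            Real.exp ((((lam n : ℂ)) * ((x : ℂ) + ((y : ℝ) : ℂ) * I)).re) := by
            simp [hF, norm_mul, Complex.norm_exp]
        _ ≤ M * Real.exp (lam n * σ₂) := by
            rw [h2]
            exact mul_le_mul h1 (Real.exp_le_exp.2
              (mul_le_mul_of_nonneg_left hx.2 (hlamnn n hn))) (Real.exp_pos _).le hMnn
    have hH : ∀ y : ℝ, ‖∫ x in σ..σ₂, F ((x : ℂ) + ((y : ℝ) : ℂ) * I)‖ ≤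
        M * Real.exp (lam n * σ₂) * |σ₂ - σ| :=
      fun y => intervalIntegral.norm_integral_le_of_norm_le_const (fun x hx => hbound y x hx)
    have habsσ : |σ₂ - σ| ≤ σ₂ := by
      rw [_root_.abs_of_nonneg (by linarith : (0:ℝ) ≤ σ₂ - σ)]; linarith
    have hMe : (0:ℝ) ≤ M * Real.exp (lam n * σ₂) := by positivity
    calc ‖(∫ t in (-T)..T, F ((σ₂ : ℂ) + (t : ℝ) * I)) -
          ∫ t in (-T)..T, F ((σ : ℂ) + (t : ℝ) * I)‖
        = ‖I * ((∫ t in (-T)..T, F ((σ₂ : ℂ) + (t : ℝ) * I)) -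
            ∫ t in (-T)..T, F ((σ : ℂ) + (t : ℝ) * I))‖ := by
          rw [norm_mul, Complex.norm_I, one_mul]
      _ = ‖(∫ x in σ..σ₂, F ((x : ℂ) + ((T : ℝ) : ℂ) * I)) -
            ∫ x in σ..σ₂, F ((x : ℂ) + ((-T : ℝ) : ℂ) * I)‖ := by rw [E2]
      _ ≤ ‖∫ x in σ..σ₂, F ((x : ℂ) + ((T : ℝ) : ℂ) * I)‖ +
            ‖∫ x in σ..σ₂, F ((x : ℂ) + ((-T : ℝ) : ℂ) * I)‖ := by
          exact norm_sub_le _ _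
      _ ≤ M * Real.exp (lam n * σ₂) * |σ₂ - σ| + M * Real.exp (lam n * σ₂) * |σ₂ - σ| := by
          have := hH T; have := hH (-T); linarith [hH T, hH (-T)]
      _ ≤ 2 * (σ₂ * (M * Real.exp (lam n * σ₂))) := by nlinarith
  -- Step B2 : trivial bound on the line Re = σ
  have hB2 : ∀ σ : ℝ, 0 < σ → ∀ T : ℝ, 0 < T →
      ‖∫ t in (-T)..T, F ((σ : ℂ) + t * I)‖ ≤ M * Real.exp (lam n * σ) * (2 * T) := by
    intro σ hσ T hT
    have := intervalIntegral.norm_integral_le_of_norm_le_const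
      (f := fun t : ℝ => F ((σ : ℂ) + t * I)) (a := -T) (b := T)
      (C := M * Real.exp (lam n * σ)) ?_
    · calc ‖∫ t in (-T)..T, F ((σ : ℂ) + t * I)‖
          ≤ M * Real.exp (lam n * σ) * |T - (-T)| := this
        _ = M * Real.exp (lam n * σ) * (2 * T) := by rw [abs_of_pos (by linarith)]; ring_nf
    · intro t ht
      have hre : ((σ : ℂ) + t * I).re = σ := by simp
      calc ‖F ((σ : ℂ) + t * I)‖
          = ‖f ((σ : ℂ) + t * I)‖ *
              Real.exp (((lam n : ℂ) * ((σ : ℂ) + t * I)).re) := by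
            simp [hF, norm_mul, Complex.norm_exp]
        _ ≤ M * Real.exp (lam n * σ) := by
            have h1 := hbd ((σ : ℂ) + t * I) (by rw [hre]; exact hσ)
            have h2 : (((lam n : ℂ)) * ((σ : ℂ) + t * I)).re = lam n * σ := by
              simp [Complex.mul_re]
            rw [h2]
            exact mul_le_mul_of_nonneg_right h1 (Real.exp_pos _).le
  -- combine: for all 0 < σ < σ₂ and T ≥ 1
  have hstep : ∀ σ : ℝ, 0 < σ → σ < σ₂ → ∀ T : ℝ, 1 ≤ T →
      ‖a n‖ ≤ M * Real.exp (lam n * σ) +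
        (2 / δ * Sr + 2 * (σ₂ * (M * Real.exp (lam n * σ₂)))) / (2 * T) := by
    intro σ hσ hσσ₂ T hT
    have hTpos : (0:ℝ) < T := by linarith
    have h2T : (0:ℝ) < 2 * T := by linarith
    have key : 2 * T * ‖a n‖ ≤
        2 / δ * Sr + 2 * (σ₂ * (M * Real.exp (lam n * σ₂))) +
          M * Real.exp (lam n * σ) * (2 * T) := by
      have e1 := hA2 T hTpos
      have e2 := hB σ hσ hσσ₂ T hTpos
      have e3 := hB2 σ hσ T hTpos
      have habs2T : ‖2 * T * a n‖ = 2 * T * ‖a n‖ := by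
        rw [norm_mul, norm_mul]
        simp [Complex.norm_ofNat, abs_of_pos hTpos]
      set I2 := ∫ t in (-T)..T, F ((σ₂ : ℂ) + t * I) with hI2
      set I1 := ∫ t in (-T)..T, F ((σ : ℂ) + t * I) with hI1
      have tri : ‖2 * T * a n‖ ≤
          ‖2 * T * a n - I2‖ + ‖I2 - I1‖ + ‖I1‖ := by
        have h1 : ‖2 * (T:ℂ) * a n‖ =
            ‖(2 * (T:ℂ) * a n - I2) + ((I2 - I1) + I1)‖ := by congr 1; ring
        rw [h1]
        exact le_trans (norm_add_le _ _)
          (by linarith [norm_add_le (I2 - I1) I1])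
      rw [habs2T] at tri
      have e1' : ‖2 * T * a n - I2‖ ≤
          2 / δ * Sr := by rwa [← norm_neg, neg_sub] at e1
      linarith
    calc ‖a n‖
        = 2 * T * ‖a n‖ / (2 * T) := by field_simp
      _ ≤ (2 / δ * Sr + 2 * (σ₂ * (M * Real.exp (lam n * σ₂))) +
            M * Real.exp (lam n * σ) * (2 * T)) / (2 * T) := by gcongr
      _ = M * Real.exp (lam n * σ) +
            (2 / δ * Sr + 2 * (σ₂ * (M * Real.exp (lam n * σ₂)))) / (2 * T) := by
          field_simp; ring
  -- let T → ∞
  have hlim1 : ∀ σ : ℝ, 0 < σ → σ < σ₂ → ‖a n‖ ≤ M * Real.exp (lam n * σ) := by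
    intro σ hσ hσσ₂
    set K := 2 / δ * Sr + 2 * (σ₂ * (M * Real.exp (lam n * σ₂))) with hK
    have htend : Tendsto (fun T : ℝ => M * Real.exp (lam n * σ) + K / (2 * T)) atTop
        (𝓝 (M * Real.exp (lam n * σ))) := by
      have h0 : Tendsto (fun T : ℝ => K / (2 * T)) atTop (𝓝 0) := by
        apply Tendsto.div_atTop tendsto_const_nhds
        exact (tendsto_id.const_mul_atTop (by norm_num : (0:ℝ) < 2))
      simpa using tendsto_const_nhds.add h0
    refine ge_of_tendsto htend ?_
    filter_upwards [eventually_ge_atTop (1:ℝ)] with T hT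
    exact hstep σ hσ hσσ₂ T hT
  -- let σ → 0⁺
  have htend2 : Tendsto (fun σ : ℝ => M * Real.exp (lam n * σ)) (𝓝[>] (0:ℝ)) (𝓝 M) := by
    have hc : Continuous (fun σ : ℝ => M * Real.exp (lam n * σ)) :=
      continuous_const.mul (Real.continuous_exp.comp (continuous_const.mul continuous_id))
    have h2 := (hc.tendsto 0).mono_left (nhdsWithin_le_nhds (s := Set.Ioi (0:ℝ)))
    simpa using h2
  refine ge_of_tendsto htend2 ?_
  filter_upwards [Ioo_mem_nhdsGT_of_mem (Set.mem_Ico.2 ⟨le_refl (0:ℝ), hσ₂pos⟩)] with σ hσ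
  exact hlim1 σ hσ.1 hσ.2

end BohrAux


/-- Bohr's theorem for frequencies with `L(λ) = 0`. -/
theorem bohr_theorem_of_L_zero (lam : ℕ → ℝ) (a : ℕ → ℂ) (f : ℂ → ℂ) (M : ℝ)
    (hfreq : IsFrequency lam)
    (hL : Tendsto (fun N : ℕ => Real.log N / lam N) atTop (nhds 0))
    (hmem : MemDExt lam a f M) :
    ∀ ε : ℝ, 0 < ε →
      (∀ s : ℂ, ε < s.re →
        Summable (fun n : ℕ =>
          ‖a (n + 1) * Complex.exp (-(lam (n + 1) : ℂ) * s)‖)) ∧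
      (∀ δ : ℝ, 0 < δ → ∃ N₀ : ℕ, ∀ N : ℕ, N₀ ≤ N → ∀ s : ℂ, ε < s.re →
        ‖partialSum lam a N s - f s‖ ≤ δ) := by
  obtain ⟨hlt, hpos1, hinf⟩ := hfreq
  obtain ⟨⟨σ₀, hconv, hconvf⟩, hdf, hbd⟩ := hmem
  have hlamnn : ∀ k : ℕ, 1 ≤ k → 0 ≤ lam k := BohrAux.lam_nonneg hlt hpos1
  have hM0 : 0 ≤ M := le_trans (norm_nonneg _) (hbd 1 (by norm_num))
  set b : ℝ := max σ₀ 0 with hbdef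
  have hbnn : 0 ≤ b := le_max_right _ _
  set σ₁ : ℝ := b + 1 with hσ₁def
  set σ₂ : ℝ := b + 2 with hσ₂def
  have hσ₁pos : 0 < σ₁ := by rw [hσ₁def]; linarith
  have hσ₂eq : σ₂ = σ₁ + 1 := by rw [hσ₁def, hσ₂def]; ring
  set g : ℕ → ℂ → ℂ := fun m s => a (1 + m) * Complex.exp (-(lam (1 + m) : ℂ) * s) with hg
  have hps : ∀ (N : ℕ) (s : ℂ), partialSum lam a N s = ∑ m ∈ range N, g m s := by
    intro N s
    induction N with
    | zero => simp [partialSum]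
    | succ k ih =>
      rw [partialSum, Finset.sum_Icc_succ_top (by omega), ← partialSum, ih,
        Finset.sum_range_succ]
      congr 1
      show a (k+1) * Complex.exp (-(lam (k+1) : ℂ) * s) =
        a (1+k) * Complex.exp (-(lam (1+k) : ℂ) * s)
      rw [Nat.add_comm]
  have habsg : ∀ (m : ℕ) (s : ℂ), ‖g m s‖ =
      ‖a (1+m)‖ * Real.exp (-(lam (1+m)) * s.re) := by
    intro m s
    show ‖a (1+m) * Complex.exp (-(lam (1+m) : ℂ) * s)‖ = _
    rw [norm_mul, Complex.norm_exp]
    congr 2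
    simp [Complex.mul_re]
  have hsummble : ∀ t : ℝ, 0 < t → Summable (fun m : ℕ => Real.exp (-lam (1+m) * t)) :=
    fun t ht => BohrAux.summable_exp_neg hinf hL ht
  -- boundedness of terms at σ₁
  obtain ⟨L, hL1⟩ := hconv (σ₁ : ℂ) (by simp [hσ₁def]; linarith [le_max_left σ₀ 0])
  have hterm : Tendsto (fun N => g N (σ₁ : ℂ)) atTop (𝓝 0) := by
    have h1 : ∀ N, g N (σ₁ : ℂ) =
        partialSum lam a (N+1) (σ₁:ℂ) - partialSum lam a N (σ₁:ℂ) := by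
      intro N; rw [hps, hps, Finset.sum_range_succ]; ring
    simp only [h1]
    have h2 := (hL1.comp (tendsto_add_atTop_nat 1)).sub hL1
    simpa using h2
  obtain ⟨C, hCmem⟩ := (((continuous_norm.tendsto 0).comp hterm)).bddAbove_range
  have hC : ∀ m : ℕ, ‖a (1+m)‖ * Real.exp (-lam (1+m) * σ₁) ≤ C := by
    intro m
    have h1 : ‖g m (σ₁ : ℂ)‖ ≤ C := hCmem (Set.mem_range_self m)
    rw [habsg] at h1
    simpa using h1
  -- the limit function
  set G : ℂ → ℂ := fun s => ∑' m, g m s with hG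
  have hgsum1 : ∀ s : ℂ, σ₁ < s.re → Summable (fun m => g m s) := by
    intro s hs
    apply Summable.of_norm
    refine Summable.of_nonneg_of_le (fun m => norm_nonneg _) ?_
      ((hsummble (s.re - σ₁) (by linarith)).mul_left C)
    intro m
    rw [habsg]
    have hsplit : Real.exp (-(lam (1+m)) * s.re) =
        Real.exp (-lam (1+m) * σ₁) * Real.exp (-lam (1+m) * (s.re - σ₁)) := by
      rw [← Real.exp_add]; congr 1; ring
    calc ‖a (1+m)‖ * Real.exp (-(lam (1+m)) * s.re)
        = (‖a (1+m)‖ * Real.exp (-lam (1+m) * σ₁)) *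
            Real.exp (-lam (1+m) * (s.re - σ₁)) := by rw [hsplit]; ring
      _ ≤ C * Real.exp (-lam (1+m) * (s.re - σ₁)) :=
          mul_le_mul_of_nonneg_right (hC m) (Real.exp_pos _).le
  have hGf : ∀ s : ℂ, σ₁ < s.re → G s = f s := by
    intro s hs
    have hbs : b < s.re := by rw [hσ₁def] at hs; linarith
    have h1 : Tendsto (fun N => partialSum lam a N s) atTop (𝓝 (f s)) := hconvf s hbs
    have h2 : Tendsto (fun N => partialSum lam a N s) atTop (𝓝 (G s)) := by
      simp only [hps]
      exact (hgsum1 s hs).hasSum.tendsto_sum_nat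
    exact tendsto_nhds_unique h2 h1
  -- coefficient bound
  have hcoef : ∀ k : ℕ, 1 ≤ k → ‖a k‖ ≤ M := by
    intro k hk
    refine BohrAux.coef_bound (n := k) hk (BohrAux.gap hlt hk) hlamnn hσ₁pos hσ₂eq
      (hsummble 1 one_pos) hC ?_ hdf hbd
    intro t
    have hre : ((σ₂ : ℂ) + (t:ℝ) * I).re = σ₂ := by simp
    have hs : σ₁ < ((σ₂ : ℂ) + (t:ℝ) * I).re := by rw [hre, hσ₂eq]; linarith
    exact (hGf _ hs).symm
  -- summability with the bound M on all of Re > 0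
  have hgsum0 : ∀ s : ℂ, 0 < s.re → Summable (fun m => g m s) := by
    intro s hs
    apply Summable.of_norm
    refine Summable.of_nonneg_of_le (fun m => norm_nonneg _) ?_
      ((hsummble s.re hs).mul_left M)
    intro m
    rw [habsg]
    exact mul_le_mul_of_nonneg_right (hcoef (1+m) (by omega)) (Real.exp_pos _).le
  -- uniform tail bound
  have htail : ∀ η : ℝ, 0 < η → ∀ N : ℕ, ∀ s : ℂ, η < s.re →
      ‖G s - partialSum lam a N s‖ ≤
        M * ∑' m : ℕ, Real.exp (-lam (1+(m+N)) * η) := by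
    intro η hη N s hs
    have hspos : 0 < s.re := lt_trans hη hs
    have hsum := hgsum0 s hspos
    have hsplit : (∑ m ∈ range N, g m s) + ∑' m, g (m+N) s = ∑' m, g m s :=
      hsum.sum_add_tsum_nat_add N
    have hdiff : G s - partialSum lam a N s = ∑' m, g (m+N) s := by
      simp only [hG]
      rw [hps, ← hsplit]; ring
    rw [hdiff]
    have hmaj : ∀ m : ℕ, ‖g (m+N) s‖ ≤ M * Real.exp (-lam (1+(m+N)) * η) := by
      intro m
      rw [habsg]
      have hlm : 0 ≤ lam (1+(m+N)) := hlamnn _ (by omega)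
      refine mul_le_mul (hcoef _ (by omega)) (Real.exp_le_exp.2 ?_) (Real.exp_pos _).le hM0
      nlinarith
    have hsummaj : Summable (fun m : ℕ => M * Real.exp (-lam (1+(m+N)) * η)) :=
      (((summable_nat_add_iff N).2 (hsummble η hη))).mul_left M
    have hsumnorm : Summable (fun m : ℕ => ‖g (m+N) s‖) :=
      Summable.of_nonneg_of_le (fun m => norm_nonneg _) hmaj hsummaj
    calc ‖∑' m, g (m+N) s‖ ≤ ∑' m, ‖g (m+N) s‖ := by
          exact norm_tsum_le_tsum_norm hsumnorm
      _ ≤ ∑' m, M * Real.exp (-lam (1+(m+N)) * η) := Summable.tsum_le_tsum hmaj hsumnorm hsummaj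
      _ = M * ∑' m, Real.exp (-lam (1+(m+N)) * η) := by rw [tsum_mul_left]
  have hRtend : ∀ η : ℝ, 0 < η →
      Tendsto (fun N : ℕ => M * ∑' m : ℕ, Real.exp (-lam (1+(m+N)) * η)) atTop (𝓝 0) := by
    intro η hη
    have h0 := tendsto_sum_nat_add (fun m : ℕ => Real.exp (-lam (1+m) * η))
    simpa using h0.const_mul M
  -- differentiability of G
  have hopen0 : IsOpen {s : ℂ | 0 < s.re} := isOpen_lt continuous_const Complex.continuous_re
  have hpsdiff : ∀ N : ℕ, Differentiable ℂ (fun s => partialSum lam a N s) := by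
    intro N
    unfold partialSum
    apply Differentiable.fun_sum
    intro i _
    exact (differentiable_const _).mul
      (((differentiable_const _).mul differentiable_id).cexp)
  have hGdiff : DifferentiableOn ℂ G {s : ℂ | 0 < s.re} := by
    have hcover : {s : ℂ | 0 < s.re} = ⋃ k : ℕ, {s : ℂ | 1/((k:ℝ)+1) < s.re} := by
      ext s
      simp only [Set.mem_setOf_eq, Set.mem_iUnion]
      constructor
      · intro h
        obtain ⟨k, hk⟩ := exists_nat_one_div_lt h
        exact ⟨k, hk⟩
      · rintro ⟨k, hk⟩
        have : (0:ℝ) < 1/((k:ℝ)+1) := by positivity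
        linarith
    have hopenk : ∀ k : ℕ, IsOpen {s : ℂ | 1/((k:ℝ)+1) < s.re} :=
      fun k => isOpen_lt continuous_const Complex.continuous_re
    rw [hcover]
    refine TendstoLocallyUniformlyOn.differentiableOn (φ := atTop)
      (F := fun N s => partialSum lam a N s) ?_ ?_ (isOpen_iUnion hopenk)
    · apply tendstoLocallyUniformlyOn_iUnion hopenk
      intro k
      apply TendstoUniformlyOn.tendstoLocallyUniformlyOn
      rw [Metric.tendstoUniformlyOn_iff]
      intro d hd
      have hηpos : (0:ℝ) < 1/((k:ℝ)+1) := by positivity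
      filter_upwards [(hRtend _ hηpos).eventually (eventually_lt_nhds hd)] with N hN s hs
      have h1 := htail _ hηpos N s hs
      calc dist (G s) (partialSum lam a N s)
          = ‖G s - partialSum lam a N s‖ := by rw [Complex.dist_eq]
        _ ≤ M * ∑' m, Real.exp (-lam (1+(m+N)) * (1/((k:ℝ)+1))) := h1
        _ < d := hN
    · filter_upwards with N
      exact (hpsdiff N).differentiableOn
  -- identity theorem
  have hGfall : Set.EqOn G f {s : ℂ | 0 < s.re} := by
    have hGa : AnalyticOnNhd ℂ G {s : ℂ | 0 < s.re} := hGdiff.analyticOnNhd hopen0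
    have hfa : AnalyticOnNhd ℂ f {s : ℂ | 0 < s.re} := hdf.analyticOnNhd hopen0
    refine hGa.eqOn_of_preconnected_of_eventuallyEq hfa
      ((convex_halfSpace_re_gt 0).isPreconnected) (z₀ := (σ₂ : ℂ))
      (by simp [hσ₂def]; linarith) ?_
    have hopen1 : IsOpen {s : ℂ | σ₁ < s.re} := isOpen_lt continuous_const Complex.continuous_re
    filter_upwards [hopen1.mem_nhds (by simp [hσ₂eq])] with s hs
    exact hGf s hs
  -- conclusion
  intro ε hε
  constructor
  · intro s hs
    refine Summable.of_nonneg_of_le (fun m => norm_nonneg _) ?_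
      ((hsummble ε hε).mul_left M)
    intro m
    have h1 : ‖a (m+1) * Complex.exp (-(lam (m+1) : ℂ) * s)‖ =
        ‖a (1+m)‖ * Real.exp (-(lam (1+m)) * s.re) := by
      rw [Nat.add_comm m 1]
      exact habsg m s
    rw [h1]
    have hlm : 0 ≤ lam (1+m) := hlamnn _ (by omega)
    refine mul_le_mul (hcoef _ (by omega)) (Real.exp_le_exp.2 ?_) (Real.exp_pos _).le hM0
    nlinarith
  · intro δ hδ
    obtain ⟨N₀, hN₀⟩ := eventually_atTop.1 ((hRtend ε hε).eventually (eventually_lt_nhds hδ))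
    refine ⟨N₀, fun N hN s hs => ?_⟩
    have hspos : 0 < s.re := lt_trans hε hs
    have h1 := htail ε hε N s hs
    rw [hGfall hspos] at h1
    calc ‖partialSum lam a N s - f s‖
        = ‖f s - partialSum lam a N s‖ := by
          rw [← norm_neg, neg_sub]
      _ ≤ M * ∑' m, Real.exp (-lam (1+(m+N)) * ε) := h1
      _ ≤ δ := (hN₀ N hN).le
end
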